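/- Let A be a self-adjoint generalized ring and 𝔭 ∈ spec(A) a prime. Then the residue field F_𝔭 is nonzero (i.e. 1 ≠ 0 in (F_𝔭)_{[1]}) if and only if the prime 𝔭 is stable. -/

import Mathlib

open scoped Classical

noncomputable section

/-! ### Partially defined maps of finite sets -/

/-- Composition of partially defined maps of sets (`Set_•`). -/
def pcomp {X Y Z : Type} (g : Y → Option Z) (f : X → Option Y) : X → Option Z :=
  fun x => (f x).bind g

/-- The fiber of a partially defined map over a point of the target. -/
abbrev pfib {X Y : Type} (f : X → Option Y) (y : Y) : Type := {x : X // f x = some y}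

/-- The fiber of the identity partial map over `x` is a singleton. -/
def idFiberEquiv {X : Type} (x : X) : Fin 1 ≃ pfib (fun x' : X => some x') x where
  toFun _ := ⟨x, rfl⟩
  invFun _ := 0
  left_inv _ := Subsingleton.elim _ _
  right_inv p := Subtype.ext (Option.some.inj p.2).symm

/-- The fiber of the constant (total) map to the point `[1]` is everything. -/
def constFiberEquiv (X : Type) (z : Fin 1) :
    X ≃ pfib (fun _ : X => some (0 : Fin 1)) z where
  toFun x := ⟨x, congrArg some (Subsingleton.elim (0 : Fin 1) z)⟩
  invFun p := p.1
  left_inv _ := rfl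
  right_inv p := rfl

/-- The fiber of (the graph of) a bijection is a singleton. -/
def equivFiberEquiv {X Y : Type} (e : X ≃ Y) (y : Y) :
    Fin 1 ≃ pfib (fun x : X => some (e x)) y where
  toFun _ := ⟨e.symm y, congrArg some (e.apply_symm_apply y)⟩
  invFun _ := 0
  left_inv _ := Subsingleton.elim _ _
  right_inv p := Subtype.ext ((Equiv.symm_apply_eq e).mpr (Option.some.inj p.2).symm)

/-- The fiber of the map `[1] → X` with image `{x}` over `x' = x` is a singleton. -/
def pointFiberEquiv {X : Type} {x x' : X} (h : x = x') :
    Fin 1 ≃ pfib (fun _ : Fin 1 => some x) x' where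
  toFun z := ⟨z, congrArg some h⟩
  invFun p := p.1
  left_inv _ := rfl
  right_inv p := rfl

/-- Restriction of `f` to the fiber of `pcomp g f` over `z`, as a partial map into
the fiber of `g` over `z`. -/
def resMap {X Y Z : Type} (g : Y → Option Z) (f : X → Option Y) (z : Z) :
    pfib (pcomp g f) z → Option (pfib g z) :=
  fun x => (f x.1).bind fun y => if h : g y = some z then some ⟨y, h⟩ else none

/-- Identification of the fibers of the restriction `resMap g f z` with fibers of `f`. -/
def resFiberEquiv {X Y Z : Type} (g : Y → Option Z) (f : X → Option Y) (z : Z)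
    (p : pfib g z) : pfib f p.1 ≃ pfib (resMap g f z) p where
  toFun x := ⟨⟨x.1, by show (f x.1).bind g = some z; rw [x.2, Option.bind_some, p.2]⟩, by
    show (f x.1).bind _ = some p
    rw [x.2, Option.bind_some, dif_pos p.2]⟩
  invFun q := ⟨q.1.1, by
    have h := q.2
    unfold resMap at h
    rcases hf : f q.1.1 with _ | y
    · rw [hf, Option.bind_none] at h
      exact absurd h (by simp)
    · rw [hf, Option.bind_some] at h
      by_cases hg : g y = some z
      · rw [dif_pos hg] at h
        have hy : y = p.1 := congrArg Subtype.val (Option.some.inj h)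
        exact congrArg some hy
      · rw [dif_neg hg] at h
        exact absurd h (by simp)⟩
  left_inv x := Subtype.ext rfl
  right_inv q := Subtype.ext (Subtype.ext rfl)

/-! ### Fibered products -/

/-- The fibered product of two partial maps `g : Z ⇀ Y` and `f : X ⇀ Y`. -/
abbrev FP {X Y Z : Type} (g : Z → Option Y) (f : X → Option Y) : Type :=
  {p : Z × X // ∃ y : Y, g p.1 = some y ∧ f p.2 = some y}

/-- First projection of the fibered product, as a partial map. -/
def fpFst {X Y Z : Type} (g : Z → Option Y) (f : X → Option Y) : FP g f → Option Z :=
  fun p => some p.1.1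

/-- Second projection of the fibered product, as a partial map. -/
def fpSnd {X Y Z : Type} (g : Z → Option Y) (f : X → Option Y) : FP g f → Option X :=
  fun p => some p.1.2

/-- Identification of the fiber of the second projection of `Z ×_Y X` over `x`
with the fiber of `g` over `f x`. -/
def fpFiberSnd {X Y Z : Type} (g : Z → Option Y) (f : X → Option Y) {x : X} {y : Y}
    (hy : f x = some y) : pfib g y ≃ pfib (fpSnd g f) x where
  toFun w := ⟨⟨(w.1, x), ⟨y, w.2, hy⟩⟩, rfl⟩
  invFun q := ⟨q.1.1.1, by
    obtain ⟨y', hg, hf⟩ := q.1.2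
    have hx : q.1.1.2 = x := Option.some.inj q.2
    rw [hx] at hf
    have hyy : y' = y := Option.some.inj (hf.symm.trans hy)
    rw [hyy] at hg
    exact hg⟩
  left_inv w := Subtype.ext rfl
  right_inv q := by
    apply Subtype.ext
    apply Subtype.ext
    have hx : q.1.1.2 = x := Option.some.inj q.2
    exact Prod.ext rfl hx.symm

/-- Identification of the fiber of the first projection of `Z ×_Y X` over `z`
with the fiber of `f` over `g z`. -/
def fpFiberFst {X Y Z : Type} (g : Z → Option Y) (f : X → Option Y) {z : Z} {y : Y}
    (hy : g z = some y) : pfib f y ≃ pfib (fpFst g f) z where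
  toFun w := ⟨⟨(z, w.1), ⟨y, hy, w.2⟩⟩, rfl⟩
  invFun q := ⟨q.1.1.2, by
    obtain ⟨y', hg, hf⟩ := q.1.2
    have hz : q.1.1.1 = z := Option.some.inj q.2
    rw [hz] at hg
    have hyy : y' = y := Option.some.inj (hg.symm.trans hy)
    rw [hyy] at hf
    exact hf⟩
  left_inv w := Subtype.ext rfl
  right_inv q := by
    apply Subtype.ext
    apply Subtype.ext
    have hz : q.1.1.1 = z := Option.some.inj q.2
    exact Prod.ext hz.symm rfl
/-! ### Generalized rings

A generalized ring assigns to each finite set `X` a pointed set `A X`, functorially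
with respect to bijections (and hence, via the operations and units, with respect to
all partial bijections of finite sets), together with operations of multiplication
`∘ : A Y × A f → A X` and contraction `( , ) : A X × A f → A Y` for every partially
defined map `f : X ⇀ Y`, where `A f = ∏_{y ∈ Y} A (f⁻¹ y)`, and a unit `1 ∈ A [1]`,
subject to the axioms of associativity, left- and right-adjunction, left- and
right-linearity, and the unit axioms. -/

/-- The data underlying a generalized ring. -/
structure GenRingData where
  /-- the pointed set attached to a finite set `X` -/
  A : (X : Type) → [inst : Finite X] → Type
  /-- the base point `0_X ∈ A_X` -/
  zero : (X : Type) → [inst : Finite X] → A X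
  /-- the unit `1 ∈ A_{[1]}` -/
  one : A (Fin 1)
  /-- functoriality with respect to bijections of finite sets -/
  map : {X Y : Type} → [inst : Finite X] → [inst' : Finite Y] → (X ≃ Y) → A X → A Y
  /-- multiplication `∘ : A_Y × A_f → A_X` for a partially defined map `f : X ⇀ Y` -/
  mul : {X Y : Type} → [inst : Finite X] → [inst' : Finite Y] → (f : X → Option Y) →
      A Y → ((y : Y) → A (pfib f y)) → A X
  /-- contraction `( , ) : A_X × A_f → A_Y` for a partially defined map `f : X ⇀ Y` -/
  contr : {X Y : Type} → [inst : Finite X] → [inst' : Finite Y] → (f : X → Option Y) →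
      A X → ((y : Y) → A (pfib f y)) → A Y

namespace GenRingData

variable (R : GenRingData)

/-- The unit family `1_{id_X} ∈ A_{id_X}`. -/
def oneId (X : Type) [Finite X] : (x : X) → R.A (pfib (fun x' : X => some x') x) :=
  fun x => R.map (idFiberEquiv x) R.one

/-- The monoid operation `a ∘ b` on `A_{[1]}`. -/
def op (a b : R.A (Fin 1)) : R.A (Fin 1) :=
  R.mul (fun z : Fin 1 => some z) a (fun z => R.map (idFiberEquiv z) b)

/-- The `n`-fold power `a ∘ ⋯ ∘ a` in the monoid `A_{[1]}` (with `a⁰ = 1`). -/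
def opPow (a : R.A (Fin 1)) : ℕ → R.A (Fin 1)
  | 0 => R.one
  | n + 1 => R.op a (opPow a n)

/-- The left action `s ∘ a` of `A_{[1]}` on `A_X` (operation (1.2.5)). -/
def lact {X : Type} [Finite X] (s : R.A (Fin 1)) (a : R.A X) : R.A X :=
  R.mul (fun _ : X => some (0 : Fin 1)) s (fun z => R.map (constFiberEquiv X z) a)

/-- The pairing `(a, d) : A_X × A_X → A_{[1]}` (operation (1.2.6)). -/
def pair {X : Type} [Finite X] (a d : R.A X) : R.A (Fin 1) :=
  R.contr (fun _ : X => some (0 : Fin 1)) a (fun z => R.map (constFiberEquiv X z) d)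

/-- The right (diagonal) action `b ∘ c` of `(A_{[1]})^X` on `A_X` (operation (1.2.7)). -/
def ract {X : Type} [Finite X] (b : R.A X) (c : X → R.A (Fin 1)) : R.A X :=
  R.mul (fun x : X => some x) b (fun x => R.map (idFiberEquiv x) (c x))

/-- The involution `a ↦ aᵗ = (1, a)` of `A_{[1]}`. -/
def adj (a : R.A (Fin 1)) : R.A (Fin 1) := R.pair R.one a

/-- The element `(a, 1_{j_x}) ∈ A_X` obtained from `a ∈ A_{[1]}` via the
inclusion `j_x : {x} ↪ X`; for `a = 1` this is the image `1_x` of the unit. -/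
def pointElt (X : Type) [Finite X] (x : X) (a : R.A (Fin 1)) : R.A X :=
  R.contr (fun _ : Fin 1 => some x) a
    (fun x' => if h : x = x' then R.map (pointFiberEquiv h) R.one else R.zero _)

/-- The extended multiplication `A_g × A_f → A_{g∘f}`, defined fiberwise. -/
def emul {X Y Z : Type} [Finite X] [Finite Y] [Finite Z]
    (g : Y → Option Z) (f : X → Option Y)
    (c : (z : Z) → R.A (pfib g z)) (b : (y : Y) → R.A (pfib f y)) :
    (z : Z) → R.A (pfib (pcomp g f) z) :=
  fun z => R.mul (resMap g f z) (c z) (fun p => R.map (resFiberEquiv g f z p) (b p.1))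

/-- The extended contraction `A_{g∘f} × A_f → A_g`, defined fiberwise. -/
def econtr {X Y Z : Type} [Finite X] [Finite Y] [Finite Z]
    (g : Y → Option Z) (f : X → Option Y)
    (a : (z : Z) → R.A (pfib (pcomp g f) z)) (b : (y : Y) → R.A (pfib f y)) :
    (z : Z) → R.A (pfib g z) :=
  fun z => R.contr (resMap g f z) (a z) (fun p => R.map (resFiberEquiv g f z p) (b p.1))

/-- The pullback `ã ∈ A_{g̃}` of `a ∈ A_g` along the fibered product (used in
the right-linearity axiom). -/
def atilde {X Y Z : Type} [Finite X] [Finite Y] [Finite Z]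
    (g : Z → Option Y) (f : X → Option Y) (a : (y : Y) → R.A (pfib g y)) :
    (x : X) → R.A (pfib (fpSnd g f) x) :=
  fun x =>
    match hfx : f x with
    | some y => R.map (fpFiberSnd g f hfx) (a y)
    | none => R.zero _

/-- The pullback `c̃ ∈ A_{f̃}` of `c ∈ A_f` along the fibered product (used in
the right-linearity axiom). -/
def ctilde {X Y Z : Type} [Finite X] [Finite Y] [Finite Z]
    (g : Z → Option Y) (f : X → Option Y) (c : (y : Y) → R.A (pfib f y)) :
    (z : Z) → R.A (pfib (fpFst g f) z) :=
  fun z =>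
    match hgz : g z with
    | some y => R.map (fpFiberFst g f hgz) (c y)
    | none => R.zero _

end GenRingData

/-- A generalized ring: the data of `GenRingData` subject to the axioms
(pointedness, functoriality, zero laws, associativity, left/right adjunction,
left/right linearity, and the unit axioms, the latter in their reduced form over
the one-point base, which is equivalent to the general form). -/
structure GenRing where
  /-- the underlying data -/
  data : GenRingData
  /-- `A_∅ = {0}` -/
  isEmpty_eq_zero : ∀ (X : Type) [Finite X] [IsEmpty X] (a : data.A X), a = data.zero X
  /-- functoriality: identity -/
  map_refl : ∀ (X : Type) [Finite X] (a : data.A X), data.map (Equiv.refl X) a = a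
  /-- functoriality: composition -/
  map_trans : ∀ {X Y Z : Type} [Finite X] [Finite Y] [Finite Z] (e : X ≃ Y) (e' : Y ≃ Z)
      (a : data.A X), data.map (e.trans e') a = data.map e' (data.map e a)
  /-- functoriality: the maps are pointed -/
  map_zero : ∀ {X Y : Type} [Finite X] [Finite Y] (e : X ≃ Y),
      data.map e (data.zero X) = data.zero Y
  /-- `0 ∘ b = 0` -/
  mul_zero_left : ∀ {X Y : Type} [Finite X] [Finite Y] (f : X → Option Y)
      (b : (y : Y) → data.A (pfib f y)), data.mul f (data.zero Y) b = data.zero X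
  /-- `a ∘ 0_f = 0` -/
  mul_zero_right : ∀ {X Y : Type} [Finite X] [Finite Y] (f : X → Option Y) (a : data.A Y),
      data.mul f a (fun y => data.zero (pfib f y)) = data.zero X
  /-- `(0, b) = 0` -/
  contr_zero_left : ∀ {X Y : Type} [Finite X] [Finite Y] (f : X → Option Y)
      (b : (y : Y) → data.A (pfib f y)), data.contr f (data.zero X) b = data.zero Y
  /-- `(a, 0_f) = 0` -/
  contr_zero_right : ∀ {X Y : Type} [Finite X] [Finite Y] (f : X → Option Y) (a : data.A X),
      data.contr f a (fun y => data.zero (pfib f y)) = data.zero Y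
  /-- associativity: `d ∘ (c ∘ b) = (d ∘ c) ∘ b` -/
  assoc : ∀ {X Y Z : Type} [Finite X] [Finite Y] [Finite Z]
      (g : Y → Option Z) (f : X → Option Y) (d : data.A Z)
      (c : (z : Z) → data.A (pfib g z)) (b : (y : Y) → data.A (pfib f y)),
      data.mul (pcomp g f) d (data.emul g f c b) = data.mul f (data.mul g d c) b
  /-- left-adjunction: `(d, a ∘ c) = ((d, c), a)` -/
  left_adj : ∀ {X Y Z : Type} [Finite X] [Finite Y] [Finite Z]
      (g : Y → Option Z) (f : X → Option Y) (d : data.A X)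
      (a : (z : Z) → data.A (pfib g z)) (c : (y : Y) → data.A (pfib f y)),
      data.contr (pcomp g f) d (data.emul g f a c) = data.contr g (data.contr f d c) a
  /-- right-adjunction: `(d ∘ c, a) = (d, (a, c))` -/
  right_adj : ∀ {X Y Z : Type} [Finite X] [Finite Y] [Finite Z]
      (g : Y → Option Z) (f : X → Option Y) (d : data.A Y)
      (a : (z : Z) → data.A (pfib (pcomp g f) z)) (c : (y : Y) → data.A (pfib f y)),
      data.contr (pcomp g f) (data.mul f d c) a = data.contr g d (data.econtr g f a c)
  /-- left-linearity: `(d ∘ a, c) = d ∘ (a, c)` -/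
  left_lin : ∀ {X Y Z : Type} [Finite X] [Finite Y] [Finite Z]
      (g : Y → Option Z) (f : X → Option Y) (d : data.A Z)
      (a : (z : Z) → data.A (pfib (pcomp g f) z)) (c : (y : Y) → data.A (pfib f y)),
      data.contr f (data.mul (pcomp g f) d a) c = data.mul g d (data.econtr g f a c)
  /-- right-linearity: `(d, c) ∘ a = (d ∘ ã, c̃)`, with `ã`, `c̃` the pullbacks
  along the fibered product `Z ×_Y X` -/
  right_lin : ∀ {X Y Z : Type} [Finite X] [Finite Y] [Finite Z]
      (g : Z → Option Y) (f : X → Option Y) (d : data.A X)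
      (a : (y : Y) → data.A (pfib g y)) (c : (y : Y) → data.A (pfib f y)),
      data.mul g (data.contr f d c) a
        = data.contr (fpFst g f) (data.mul (fpSnd g f) d (data.atilde g f a))
            (data.ctilde g f c)
  /-- unit axiom: `a ∘ 1_{id_X} = a` -/
  mul_one_id : ∀ (X : Type) [Finite X] (a : data.A X),
      data.mul (fun x : X => some x) a (data.oneId X) = a
  /-- unit axiom: `1 ∘ a = a` -/
  one_lact : ∀ (X : Type) [Finite X] (a : data.A X), data.lact data.one a = a
  /-- unit axiom: `(a, 1_{id_X}) = a` -/
  contr_one_id : ∀ (X : Type) [Finite X] (a : data.A X),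
      data.contr (fun x : X => some x) a (data.oneId X) = a
  /-- unit axiom (1.8.11): `(a, 1_f) = f_A(a)` for a bijection `f = e` -/
  map_eq_contr : ∀ {X Y : Type} [Finite X] [Finite Y] (e : X ≃ Y) (a : data.A X),
      data.contr (fun x : X => some (e x)) a
        (fun y => data.map (equivFiberEquiv e y) data.one) = data.map e a
  /-- unit axiom (1.8.11): `a ∘ 1_{fᵗ} = f_A(a)` for a bijection `f = e` -/
  map_eq_mul : ∀ {X Y : Type} [Finite X] [Finite Y] (e : X ≃ Y) (a : data.A X),
      data.mul (fun y : Y => some (e.symm y)) a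
        (fun x => data.map (equivFiberEquiv e.symm x) data.one) = data.map e a
namespace GenRing

variable (R : GenRing)

/-- An `h`-ideal of a generalized ring: a subset `I ⊆ A_{[1]}` such that
`(b ∘ c, d) ∈ I` for all finite `X`, all `b, d ∈ A_X` and all `c ∈ I^X ⊆ (A_{[1]})^X`. -/
def IsHIdeal (I : Set (R.data.A (Fin 1))) : Prop :=
  ∀ (X : Type) [Finite X], ∀ (b d : R.data.A X) (c : X → R.data.A (Fin 1)),
    (∀ x, c x ∈ I) → R.data.pair (R.data.ract b c) d ∈ I

/-- A prime of a generalized ring: a proper `h`-ideal `P` whose complement is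
closed under the multiplication of `A_{[1]}`. -/
def IsPrimeH (P : Set (R.data.A (Fin 1))) : Prop :=
  R.IsHIdeal P ∧ R.data.one ∉ P ∧
    ∀ a b : R.data.A (Fin 1), R.data.op a b ∈ P → a ∈ P ∨ b ∈ P

end GenRing

/-- The spectrum of a generalized ring: the set of its primes. -/
structure SpecG (R : GenRing) where
  /-- the underlying prime `h`-ideal -/
  I : Set (R.data.A (Fin 1))
  /-- it is prime -/
  prime : R.IsPrimeH I

namespace GenRing

variable (R : GenRing)

/-- The basic open set `D_a = {𝔭 : a ∉ 𝔭}` of the Zariski topology. -/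
def basicOpen (a : R.data.A (Fin 1)) : Set (SpecG R) := {p | a ∉ p.I}

/-- The closed set `V(s) = {𝔭 : 𝔭 ⊇ s}` of the Zariski topology. -/
def zeroLocus (s : Set (R.data.A (Fin 1))) : Set (SpecG R) := {p | s ⊆ p.I}

/-- The Zariski topology on the spectrum, generated by the basic open sets. -/
instance : TopologicalSpace (SpecG R) :=
  TopologicalSpace.generateFrom {U | ∃ a : R.data.A (Fin 1), U = R.basicOpen a}

end GenRing

/-- A homomorphism of generalized rings: a (pointed, natural) family of maps
preserving multiplication, contraction and the unit. -/
structure GenRingHom (R S : GenRing) where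
  /-- the underlying family of maps -/
  app : (X : Type) → [inst : Finite X] → R.data.A X → S.data.A X
  /-- zero is preserved -/
  app_zero : ∀ (X : Type) [Finite X], app X (R.data.zero X) = S.data.zero X
  /-- the unit is preserved -/
  app_one : app (Fin 1) R.data.one = S.data.one
  /-- naturality with respect to bijections -/
  app_map : ∀ {X Y : Type} [Finite X] [Finite Y] (e : X ≃ Y) (a : R.data.A X),
      app Y (R.data.map e a) = S.data.map e (app X a)
  /-- multiplication is preserved -/
  app_mul : ∀ {X Y : Type} [Finite X] [Finite Y] (f : X → Option Y)
      (a : R.data.A Y) (b : (y : Y) → R.data.A (pfib f y)),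
      app X (R.data.mul f a b) = S.data.mul f (app Y a) (fun y => app (pfib f y) (b y))
  /-- contraction is preserved -/
  app_contr : ∀ {X Y : Type} [Finite X] [Finite Y] (f : X → Option Y)
      (a : R.data.A X) (b : (y : Y) → R.data.A (pfib f y)),
      app Y (R.data.contr f a b) = S.data.contr f (app X a) (fun y => app (pfib f y) (b y))

namespace GenRingHom

variable {R S : GenRing} (φ : GenRingHom R S)

theorem app_op (a b : R.data.A (Fin 1)) :
    φ.app (Fin 1) (R.data.op a b) = S.data.op (φ.app (Fin 1) a) (φ.app (Fin 1) b) := by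
  unfold GenRingData.op
  rw [φ.app_mul]
  congr 1
  funext z
  rw [φ.app_map]

theorem app_ract {X : Type} [Finite X] (b : R.data.A X) (c : X → R.data.A (Fin 1)) :
    φ.app X (R.data.ract b c) = S.data.ract (φ.app X b) (fun x => φ.app (Fin 1) (c x)) := by
  unfold GenRingData.ract
  rw [φ.app_mul]
  congr 1
  funext x
  rw [φ.app_map]

theorem app_pair {X : Type} [Finite X] (a d : R.data.A X) :
    φ.app (Fin 1) (R.data.pair a d) = S.data.pair (φ.app X a) (φ.app X d) := by
  unfold GenRingData.pair
  rw [φ.app_contr]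
  congr 1
  funext z
  rw [φ.app_map]

theorem app_lact {X : Type} [Finite X] (s : R.data.A (Fin 1)) (a : R.data.A X) :
    φ.app X (R.data.lact s a) = S.data.lact (φ.app (Fin 1) s) (φ.app X a) := by
  unfold GenRingData.lact
  rw [φ.app_mul]
  congr 1
  funext z
  rw [φ.app_map]

/-- The map `spec(φ) : spec(S) → spec(R)`, `𝔮 ↦ φ_{[1]}⁻¹(𝔮)`, induced by a
homomorphism of generalized rings `φ : R → S`. -/
def specMap (q : SpecG S) : SpecG R where
  I := φ.app (Fin 1) ⁻¹' q.I
  prime := by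
    refine ⟨?_, ?_, ?_⟩
    · intro X _ b d c hc
      show φ.app (Fin 1) (R.data.pair (R.data.ract b c) d) ∈ q.I
      rw [φ.app_pair, φ.app_ract]
      exact q.prime.1 X (φ.app X b) (φ.app X d) (fun x => φ.app (Fin 1) (c x)) hc
    · show φ.app (Fin 1) R.data.one ∉ q.I
      rw [φ.app_one]
      exact q.prime.2.1
    · intro a b hab
      have h : S.data.op (φ.app (Fin 1) a) (φ.app (Fin 1) b) ∈ q.I := by
        rw [← φ.app_op]; exact hab
      exact q.prime.2.2 _ _ h

end GenRingHom

/-- An equivalence ideal of a generalized ring: a family of equivalence relations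
on the sets `A_X` respecting the operations of multiplication and contraction. -/
structure EqvIdeal (R : GenRing) where
  /-- the family of relations -/
  rel : (X : Type) → [inst : Finite X] → R.data.A X → R.data.A X → Prop
  refl : ∀ (X : Type) [Finite X] (a : R.data.A X), rel X a a
  symm : ∀ (X : Type) [Finite X] {a b : R.data.A X}, rel X a b → rel X b a
  trans : ∀ (X : Type) [Finite X] {a b c : R.data.A X}, rel X a b → rel X b c → rel X a c
  /-- `a ∼ a'` implies `a ∘ b ∼ a' ∘ b` -/
  mul_left : ∀ {X Y : Type} [Finite X] [Finite Y] (f : X → Option Y) {a a' : R.data.A Y}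
      (b : (y : Y) → R.data.A (pfib f y)),
      rel Y a a' → rel X (R.data.mul f a b) (R.data.mul f a' b)
  /-- `b ∼ b'` (componentwise) implies `a ∘ b ∼ a ∘ b'` -/
  mul_right : ∀ {X Y : Type} [Finite X] [Finite Y] (f : X → Option Y) (a : R.data.A Y)
      {b b' : (y : Y) → R.data.A (pfib f y)},
      (∀ y, rel (pfib f y) (b y) (b' y)) → rel X (R.data.mul f a b) (R.data.mul f a b')
  /-- `a ∼ a'` implies `(a, b) ∼ (a', b)` -/
  contr_left : ∀ {X Y : Type} [Finite X] [Finite Y] (f : X → Option Y) {a a' : R.data.A X}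
      (b : (y : Y) → R.data.A (pfib f y)),
      rel X a a' → rel Y (R.data.contr f a b) (R.data.contr f a' b)
  /-- `b ∼ b'` (componentwise) implies `(a, b) ∼ (a, b')` -/
  contr_right : ∀ {X Y : Type} [Finite X] [Finite Y] (f : X → Option Y) (a : R.data.A X)
      {b b' : (y : Y) → R.data.A (pfib f y)},
      (∀ y, rel (pfib f y) (b y) (b' y)) → rel Y (R.data.contr f a b) (R.data.contr f a b')

namespace GenRing

variable (R : GenRing)

/-- The equivalence ideal `E(I)` generated by an (`h`-)ideal `I`: `a ∼ b` iff the
pair `(a, b)` belongs to every equivalence ideal containing `(i, 0)` for all `i ∈ I`. -/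
def erel (I : Set (R.data.A (Fin 1))) (X : Type) [Finite X] (a b : R.data.A X) : Prop :=
  ∀ ε : EqvIdeal R, (∀ i ∈ I, ε.rel (Fin 1) i (R.data.zero (Fin 1))) → ε.rel X a b

/-- A stable `h`-ideal: an `h`-ideal `I` such that for every pair `(a, b)` in the
equivalence ideal `E(I)` generated by `I` one has `a ∈ I ↔ b ∈ I`. -/
def IsStableHIdeal (I : Set (R.data.A (Fin 1))) : Prop :=
  R.IsHIdeal I ∧ ∀ a b : R.data.A (Fin 1), R.erel I (Fin 1) a b → (a ∈ I ↔ b ∈ I)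

/-- A multiplicative subset of `A_{[1]}`: contains `1`, closed under `∘`,
and stable under the involution. -/
def IsMulSet (S : Set (R.data.A (Fin 1))) : Prop :=
  R.data.one ∈ S ∧ (∀ a ∈ S, ∀ b ∈ S, R.data.op a b ∈ S) ∧
    (∀ a, a ∈ S ↔ R.data.adj a ∈ S)

/-- `φ : R → L` presents `L` as the localization `S⁻¹R` of `R` at the
multiplicative subset `S ⊆ A_{[1]}`: every element of `S` becomes invertible, every
element of `L` is a fraction `φ(a)/φ(s)`, and `φ(a) = φ(b)` iff `s ∘ a = s ∘ b`
for some `s ∈ S`. -/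
def IsLocalizationAt (S : Set (R.data.A (Fin 1))) {L : GenRing} (φ : GenRingHom R L) : Prop :=
  (∀ s ∈ S, ∃ t : L.data.A (Fin 1),
      L.data.op t (φ.app (Fin 1) s) = L.data.one ∧
      L.data.op (φ.app (Fin 1) s) t = L.data.one) ∧
  (∀ (X : Type) [Finite X], ∀ l : L.data.A X, ∃ (a : R.data.A X) (s : R.data.A (Fin 1)),
      s ∈ S ∧ L.data.lact (φ.app (Fin 1) s) l = φ.app X a) ∧
  (∀ (X : Type) [Finite X], ∀ a b : R.data.A X,
      φ.app X a = φ.app X b ↔ ∃ s ∈ S, R.data.lact s a = R.data.lact s b)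

end GenRing

namespace GenRing

variable (G : GenRing)

instance pfib_subsingleton {X Y : Type} [Subsingleton X] (f : X → Option Y) (y : Y) :
    Subsingleton (pfib f y) :=
  ⟨fun a b => Subtype.ext (Subsingleton.elim _ _)⟩

theorem ss_graph {Q T : Type} (e : T ≃ Q) (F : Q → Option T)
    (hF : ∀ q, F q = some (e.symm q)) (t : T) : Subsingleton (pfib F t) := by
  constructor
  intro a b
  apply Subtype.ext
  have ha := a.2; have hb := b.2
  rw [hF] at ha hb
  exact e.symm.injective ((Option.some.inj ha).trans (Option.some.inj hb).symm)

theorem equiv_eq {α β : Type} [Subsingleton β] (e₁ e₂ : α ≃ β) : e₁ = e₂ :=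
  Equiv.ext fun a => Subsingleton.elim _ _

theorem heq_map {X T₁ T₂ : Type} [Finite X] [Finite T₁] [Finite T₂]
    (h : T₁ = T₂) (hss : Subsingleton T₂) (e₁ : X ≃ T₁) (e₂ : X ≃ T₂)
    (a : G.data.A X) : HEq (G.data.map e₁ a) (G.data.map e₂ a) := by
  subst h
  rw [equiv_eq e₁ e₂]

theorem heq_map₂ {X T₁ T₂ : Type} [Finite X] [Finite T₁] [Finite T₂]
    (h : T₁ = T₂) (e₁ : X ≃ T₁) (e₂ : X ≃ T₂) (hpt : ∀ x, HEq (e₁ x) (e₂ x))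
    (a : G.data.A X) : HEq (G.data.map e₁ a) (G.data.map e₂ a) := by
  subst h
  rw [Equiv.ext fun x => eq_of_heq (hpt x)]

theorem heq_pfib {Q T : Type} {F F' : Q → Option T} (h : F = F') {t : T}
    (x : pfib F t) (y : pfib F' t) (hxy : x.1 = y.1) : HEq x y := by
  subst h
  exact heq_of_eq (Subtype.ext hxy)

theorem mul_congr {X Y : Type} [Finite X] [Finite Y]
    {f g : X → Option Y} (h : f = g) (a : G.data.A Y)
    {b : (y : Y) → G.data.A (pfib f y)} {c : (y : Y) → G.data.A (pfib g y)}
    (hbc : ∀ y, HEq (b y) (c y)) :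
    G.data.mul f a b = G.data.mul g a c := by
  subst h
  rw [funext fun y => eq_of_heq (hbc y)]

theorem contr_congr {X Y : Type} [Finite X] [Finite Y]
    {f g : X → Option Y} (h : f = g) (a : G.data.A X)
    {b : (y : Y) → G.data.A (pfib f y)} {c : (y : Y) → G.data.A (pfib g y)}
    (hbc : ∀ y, HEq (b y) (c y)) :
    G.data.contr f a b = G.data.contr g a c := by
  subst h
  rw [funext fun y => eq_of_heq (hbc y)]

/-- mul over the graph of a bijection with unit family is `map` (KL4). -/
theorem mul_units {Q T : Type} [Finite Q] [Finite T] (F : Q → Option T)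
    (e : T ≃ Q) (hF : ∀ q, F q = some (e.symm q)) (a : G.data.A T)
    (u : (t : T) → G.data.A (pfib F t))
    (hu : ∀ t, ∃ e2 : Fin 1 ≃ pfib F t, u t = G.data.map e2 G.data.one) :
    G.data.mul F a u = G.data.map e a := by
  have hFe : F = fun q => some (e.symm q) := funext hF
  have key : G.data.mul F a u
      = G.data.mul (fun q => some (e.symm q)) a
        (fun t => G.data.map (equivFiberEquiv e.symm t) G.data.one) := by
    apply mul_congr G hFe a
    intro t
    obtain ⟨e2, he2⟩ := hu t
    rw [he2]
    exact heq_map G (by rw [hFe]) (ss_graph e _ (fun _ => rfl) t) e2 _ G.data.one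
  rw [key]
  exact G.map_eq_mul e a

/-- contr over the graph of a bijection with unit family is `map` (KL5). -/
theorem contr_units {Q T : Type} [Finite Q] [Finite T] (F : Q → Option T)
    (e : Q ≃ T) (hF : ∀ q, F q = some (e q)) (a : G.data.A Q)
    (u : (t : T) → G.data.A (pfib F t))
    (hu : ∀ t, ∃ e2 : Fin 1 ≃ pfib F t, u t = G.data.map e2 G.data.one) :
    G.data.contr F a u = G.data.map e a := by
  have hFe : F = fun q => some (e q) := funext hF
  have key : G.data.contr F a u
      = G.data.contr (fun q => some (e q)) a
        (fun t => G.data.map (equivFiberEquiv e t) G.data.one) := by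
    apply contr_congr G hFe a
    intro t
    obtain ⟨e2, he2⟩ := hu t
    rw [he2]
    refine heq_map G (by rw [hFe]) ?_ e2 _ G.data.one
    exact ss_graph e.symm _ (fun _ => by simp) t
  rw [key]
  exact G.map_eq_contr e a

theorem mul_fam_zero {X Y : Type} [Finite X] [Finite Y] (f : X → Option Y)
    (a : G.data.A Y) {b : (y : Y) → G.data.A (pfib f y)}
    (hb : ∀ y, b y = G.data.zero _) : G.data.mul f a b = G.data.zero X := by
  rw [funext hb]
  exact G.mul_zero_right f a

theorem contr_fam_zero {X Y : Type} [Finite X] [Finite Y] (f : X → Option Y)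
    (a : G.data.A X) {b : (y : Y) → G.data.A (pfib f y)}
    (hb : ∀ y, b y = G.data.zero _) : G.data.contr f a b = G.data.zero Y := by
  rw [funext hb]
  exact G.contr_zero_right f a

/-- transport of fibers along an equivalence of domains -/
def fibEquiv {Q D Y : Type} (B : Q ≃ D) (F : Q → Option Y) (F' : D → Option Y)
    (h : ∀ q, F q = F' (B q)) (y : Y) : pfib F y ≃ pfib F' y where
  toFun q := ⟨B q.1, by rw [← h]; exact q.2⟩
  invFun d := ⟨B.symm d.1, by rw [h, B.apply_symm_apply]; exact d.2⟩
  left_inv q := Subtype.ext (B.symm_apply_apply q.1)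
  right_inv d := Subtype.ext (B.apply_symm_apply d.1)

/-- the twisted right diagonal action `(w, v^diag)` -/
def dract {X : Type} [Finite X] (w : G.data.A X) (v : G.data.A (Fin 1)) : G.data.A X :=
  G.data.contr (fun x : X => some x) w (fun x => G.data.map (idFiberEquiv x) v)

theorem op_zero_left (b : G.data.A (Fin 1)) :
    G.data.op (G.data.zero _) b = G.data.zero _ := G.mul_zero_left _ _

theorem op_zero_right (a : G.data.A (Fin 1)) :
    G.data.op a (G.data.zero _) = G.data.zero _ :=
  G.mul_fam_zero _ a (fun y => G.map_zero _)

theorem op_one_right (a : G.data.A (Fin 1)) : G.data.op a G.data.one = a :=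
  G.mul_one_id (Fin 1) a

theorem op_eq_lact (s a : G.data.A (Fin 1)) : G.data.op s a = G.data.lact s a := by
  apply mul_congr G (funext fun z : Fin 1 => congrArg some (Subsingleton.elim z 0)) s
  intro z
  exact heq_map G
    (congrArg (fun f : Fin 1 → Option (Fin 1) => pfib f z)
      (funext fun w : Fin 1 => congrArg some (Subsingleton.elim w 0)))
    (pfib_subsingleton _ _) (idFiberEquiv z) (constFiberEquiv (Fin 1) z) a

theorem op_one_left (a : G.data.A (Fin 1)) : G.data.op G.data.one a = a := by
  rw [op_eq_lact]; exact G.one_lact _ a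

theorem lact_zero {X : Type} [Finite X] (s : G.data.A (Fin 1)) :
    G.data.lact s (G.data.zero X) = G.data.zero X :=
  G.mul_fam_zero _ s (fun y => G.map_zero _)

theorem lact_zero_left {X : Type} [Finite X] (a : G.data.A X) :
    G.data.lact (G.data.zero _) a = G.data.zero X := G.mul_zero_left _ _

theorem dract_zero_left {X : Type} [Finite X] (v : G.data.A (Fin 1)) :
    G.dract (G.data.zero X) v = G.data.zero X := G.contr_zero_left _ _

theorem dract_zero_right {X : Type} [Finite X] (w : G.data.A X) :
    G.dract w (G.data.zero _) = G.data.zero X :=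
  G.contr_fam_zero _ w (fun y => G.map_zero _)

theorem pair_one_right (a : G.data.A (Fin 1)) : G.data.pair a G.data.one = a := by
  have key : G.data.pair a G.data.one
      = G.data.contr (fun z : Fin 1 => some z) a (G.data.oneId (Fin 1)) := by
    apply contr_congr G (funext fun z : Fin 1 => congrArg some (Subsingleton.elim 0 z)) a
    intro z
    exact heq_map G
      (congrArg (fun f : Fin 1 → Option (Fin 1) => pfib f z)
        (funext fun w : Fin 1 => congrArg some (Subsingleton.elim (0 : Fin 1) w)))
      (pfib_subsingleton _ _) (constFiberEquiv (Fin 1) z) (idFiberEquiv z) G.data.one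
  rw [key]
  exact G.contr_one_id (Fin 1) a

theorem pair_eq_dract (a d : G.data.A (Fin 1)) : G.data.pair a d = G.dract a d := by
  apply contr_congr G (funext fun z : Fin 1 => congrArg some (Subsingleton.elim (0:Fin 1) z)) a
  intro z
  exact heq_map G
    (congrArg (fun f : Fin 1 → Option (Fin 1) => pfib f z)
      (funext fun w : Fin 1 => congrArg some (Subsingleton.elim (0 : Fin 1) w)))
    (pfib_subsingleton _ _) (constFiberEquiv (Fin 1) z) (idFiberEquiv z) d

/-- evaluation of `emul` along the graph of a bijection with unit family (generic). -/
theorem emul_graph_units {Q D Z : Type} [Finite Q] [Finite D] [Finite Z]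
    (g : Q → Option Z) (C : D ≃ Q) (c : (z : Z) → G.data.A (pfib g z)) (z : Z) :
    G.data.emul g (fun d => some (C d)) c
      (fun q => G.data.map (equivFiberEquiv C q) G.data.one) z
    = G.data.map
        (fibEquiv C.symm g (pcomp g (fun d => some (C d)))
          (fun q => by show g q = g (C (C.symm q)); rw [C.apply_symm_apply]) z)
        (c z) := by
  unfold GenRingData.emul
  apply mul_units
  · intro p
    show (Option.bind (some (C p.1)) fun y =>
      if h : g y = some z then some (⟨y, h⟩ : pfib g z) else none) = _
    rw [Option.bind_some]
    have hp : g (C p.1) = some z := p.2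
    rw [dif_pos hp]
    exact congrArg some (Subtype.ext rfl)
  · intro t
    exact ⟨(equivFiberEquiv C t.1).trans (resFiberEquiv g (fun d => some (C d)) z t),
      (G.map_trans _ _ _).symm⟩

theorem map_lact {Q D : Type} [Finite Q] [Finite D] (B : Q ≃ D)
    (s : G.data.A (Fin 1)) (x : G.data.A Q) :
    G.data.map B (G.data.lact s x) = G.data.lact s (G.data.map B x) := by
  have h1 := G.map_eq_mul B (G.data.lact s x)
  have h2 := G.assoc (fun _ : Q => some (0 : Fin 1)) (fun d : D => some (B.symm d))
      s (fun z => G.data.map (constFiberEquiv Q z) x)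
      (fun q => G.data.map (equivFiberEquiv B.symm q) G.data.one)
  rw [← h1]
  unfold GenRingData.lact
  rw [← h2]
  apply mul_congr G rfl s
  intro z
  rw [emul_graph_units G (fun _ : Q => some (0 : Fin 1)) B.symm
    (fun z => G.data.map (constFiberEquiv Q z) x) z]
  rw [← G.map_trans, ← G.map_trans]
  apply heq_map₂ G rfl
  intro q
  exact heq_of_eq (Subtype.ext rfl)

/-- the canonical equivalence with a full fiber -/
def fullEquiv {D T : Type} (F : D → Option T) (t : T) (hF : ∀ d, F d = some t) :
    D ≃ pfib F t where
  toFun d := ⟨d, hF d⟩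
  invFun p := p.1
  left_inv d := rfl
  right_inv p := Subtype.ext rfl

/-- the canonical equivalence of `D` with the fibered product `FP F g` when `g` is the
graph of `e1 : Fin 1 ≃ T` and `F` is constant. -/
def fpConstEquiv {D T : Type} (F : D → Option T) (e1 : Fin 1 ≃ T)
    (hF : ∀ d, F d = some (e1 0)) : D ≃ FP F (fun z : Fin 1 => some (e1 z)) where
  toFun d := ⟨(d, 0), ⟨e1 0, hF d, rfl⟩⟩
  invFun p := p.1.1
  left_inv d := rfl
  right_inv p := Subtype.ext (Prod.ext rfl (Subsingleton.elim _ _))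

/-- KL: multiplication with a transported scalar base over a map into a
subsingleton target is a left scalar action. -/
theorem mul_sbase {D T : Type} [Finite D] [Finite T] (hT : Subsingleton T)
    (F : D → Option T) (e1 : Fin 1 ≃ T) (hF : ∀ d, F d = some (e1 0))
    (s : G.data.A (Fin 1)) (fam : (t : T) → G.data.A (pfib F t)) (w : G.data.A D)
    (hfam : fam (e1 0) = G.data.map (fullEquiv F (e1 0) hF) w) :
    G.data.mul F (G.data.map e1 s) fam = G.data.lact s w := by
  have hgraph := G.map_eq_contr e1 s
  have hrl := G.right_lin F (fun z : Fin 1 => some (e1 z)) s fam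
      (fun t => G.data.map (equivFiberEquiv e1 t) G.data.one)
  rw [hgraph] at hrl
  rw [hrl]
  have hinner : G.data.mul (fpSnd F (fun z : Fin 1 => some (e1 z))) s
      (G.data.atilde F (fun z : Fin 1 => some (e1 z)) fam)
      = G.data.lact s (G.data.map (fpConstEquiv F e1 hF) w) := by
    refine mul_congr G
      (show fpSnd F (fun z : Fin 1 => some (e1 z))
          = (fun _ : FP F (fun z : Fin 1 => some (e1 z)) => some (0 : Fin 1)) from
        funext fun p => congrArg some (Subsingleton.elim p.1.2 0)) s ?_
    intro z
    have hz : z = 0 := Subsingleton.elim z 0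
    subst hz
    show HEq
      (G.data.map (fpFiberSnd F (fun z : Fin 1 => some (e1 z))
        (rfl : (fun z : Fin 1 => some (e1 z)) 0 = some (e1 0))) (fam (e1 0))) _
    rw [hfam, ← G.map_trans, ← G.map_trans]
    apply heq_map₂ G
      (congrArg (fun f : FP F (fun z : Fin 1 => some (e1 z)) → Option (Fin 1) => pfib f 0)
        (funext fun p => congrArg some (Subsingleton.elim p.1.2 0)))
    intro d
    apply heq_pfib (show fpSnd F (fun z : Fin 1 => some (e1 z))
        = (fun _ : FP F (fun z : Fin 1 => some (e1 z)) => some (0 : Fin 1)) from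
      funext fun p => congrArg some (Subsingleton.elim p.1.2 0))
    exact Subtype.ext rfl
  rw [hinner, ← map_lact]
  have houter : G.data.contr (fpFst F (fun z : Fin 1 => some (e1 z)))
      (G.data.map (fpConstEquiv F e1 hF) (G.data.lact s w))
      (G.data.ctilde F (fun z : Fin 1 => some (e1 z))
        (fun t => G.data.map (equivFiberEquiv e1 t) G.data.one))
      = G.data.map (fpConstEquiv F e1 hF).symm
          (G.data.map (fpConstEquiv F e1 hF) (G.data.lact s w)) := by
    apply contr_units
    · intro p; rfl
    · intro d
      unfold GenRingData.ctilde
      split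
      · rename_i y hy
        exact ⟨(equivFiberEquiv e1 y).trans
          (fpFiberFst F (fun z : Fin 1 => some (e1 z)) hy), (G.map_trans _ _ _).symm⟩
      · rename_i hy
        exact absurd ((hF d).symm.trans hy) (by simp)
  rw [houter, ← G.map_trans, Equiv.self_trans_symm, G.map_refl]

/-- flexible version of `mul_sbase`. -/
theorem mul_sbase' {D T V : Type} [Finite D] [Finite T] [Finite V] (hT : Subsingleton T)
    (F : D → Option T) (e1 : Fin 1 ≃ T) (hF : ∀ d, F d = some (e1 0))
    (s : G.data.A (Fin 1)) (fam : (t : T) → G.data.A (pfib F t)) (v : G.data.A V)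
    (Ee : V ≃ pfib F (e1 0)) (hfam : fam (e1 0) = G.data.map Ee v) :
    G.data.mul F (G.data.map e1 s) fam
      = G.data.map (Ee.trans (fullEquiv F (e1 0) hF).symm) (G.data.lact s v) := by
  rw [map_lact]
  apply mul_sbase G hT F e1 hF s fam
  rw [← G.map_trans, hfam]
  congr 1

theorem lact_lact {X : Type} [Finite X] (x y : G.data.A (Fin 1)) (w : G.data.A X) :
    G.data.lact x (G.data.lact y w) = G.data.lact (G.data.op x y) w := by
  rw [G.op_eq_lact x y]
  have h2 := G.assoc (fun _ : Fin 1 => some (0 : Fin 1)) (fun _ : X => some (0 : Fin 1))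
      x (fun z => G.data.map (constFiberEquiv (Fin 1) z) y)
      (fun z => G.data.map (constFiberEquiv X z) w)
  show _ = G.data.mul (fun _ : X => some (0:Fin 1))
    (G.data.mul (fun _ : Fin 1 => some (0:Fin 1)) x
      (fun z => G.data.map (constFiberEquiv (Fin 1) z) y))
    (fun z => G.data.map (constFiberEquiv X z) w)
  rw [← h2]
  show G.data.mul (fun _ : X => some (0:Fin 1)) x
    (fun z => G.data.map (constFiberEquiv X z) (G.data.lact y w)) = _
  refine mul_congr G rfl x ?_
  intro z
  have hFF : ∀ p : pfib (pcomp (fun _ : Fin 1 => some (0:Fin 1))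
      (fun _ : X => some (0:Fin 1))) z,
      resMap (fun _ : Fin 1 => some (0:Fin 1)) (fun _ : X => some (0:Fin 1)) z p
        = some (constFiberEquiv (Fin 1) z 0) := by
    intro p
    unfold resMap
    rw [Option.bind_some,
      dif_pos (show (fun _ : Fin 1 => some (0:Fin 1)) (0:Fin 1) = some z from p.2)]
    exact congrArg some (Subtype.ext rfl)
  have hcomp := mul_sbase' G (pfib_subsingleton _ _)
    (resMap (fun _ : Fin 1 => some (0:Fin 1)) (fun _ : X => some (0:Fin 1)) z)
    (constFiberEquiv (Fin 1) z) hFF y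
    (fun p => G.data.map
      (resFiberEquiv (fun _ : Fin 1 => some (0:Fin 1)) (fun _ : X => some (0:Fin 1)) z p)
      (G.data.map (constFiberEquiv X p.1) w))
    w
    ((constFiberEquiv X ((constFiberEquiv (Fin 1) z 0).1)).trans
      (resFiberEquiv (fun _ : Fin 1 => some (0:Fin 1)) (fun _ : X => some (0:Fin 1)) z
        (constFiberEquiv (Fin 1) z 0)))
    (by beta_reduce; rw [← G.map_trans])
  show HEq (G.data.map (constFiberEquiv X z) (G.data.lact y w))
    (G.data.mul
      (resMap (fun _ : Fin 1 => some (0:Fin 1)) (fun _ : X => some (0:Fin 1)) z)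
      (G.data.map (constFiberEquiv (Fin 1) z) y)
      (fun p => G.data.map
        (resFiberEquiv (fun _ : Fin 1 => some (0:Fin 1)) (fun _ : X => some (0:Fin 1)) z p)
        (G.data.map (constFiberEquiv X p.1) w)))
  rw [hcomp]
  apply heq_map₂ G rfl
  intro x0
  exact heq_of_eq (Subtype.ext rfl)

theorem op_assoc (x y z : G.data.A (Fin 1)) :
    G.data.op x (G.data.op y z) = G.data.op (G.data.op x y) z := by
  rw [G.op_eq_lact x (G.data.op y z), G.op_eq_lact (G.data.op x y) z,
    ← G.lact_lact x y z, G.op_eq_lact y z]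

theorem lact_one_scalar (v : G.data.A (Fin 1)) : G.data.lact v G.data.one = v := by
  rw [← G.op_eq_lact]; exact op_one_right G v

theorem ss_pfib_id {X : Type} (t : X) : Subsingleton (pfib (fun x : X => some x) t) :=
  ss_graph (Equiv.refl X) _ (fun _ => rfl) t

theorem map_pfib_id {X Y : Type} [Finite X] [Finite Y] {F F' : X → Option Y} (h : F = F')
    {z : Y} [Finite (pfib F z)] [Finite (pfib F' z)]
    (E : pfib F z ≃ pfib F' z) (hE : ∀ q, (E q).1 = q.1) (a : G.data.A (pfib F z)) :
    HEq (G.data.map E a) a := by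
  subst h
  rw [show E = Equiv.refl _ from Equiv.ext fun q => Subtype.ext (hE q), G.map_refl]

/-- KL2: contraction along the graph of a bijection against a constant scalar
family is the twisted diagonal action. -/
theorem contr_gdiag {Q D : Type} [Finite Q] [Finite D] (F : Q → Option D) (E : Q ≃ D)
    (hF : ∀ q, F q = some (E q)) (x : G.data.A Q) (v : G.data.A (Fin 1))
    (fam : (d : D) → G.data.A (pfib F d))
    (hfam : ∀ d, ∃ e2 : Fin 1 ≃ pfib F d, fam d = G.data.map e2 v) :
    G.data.contr F x fam = G.data.map E (G.dract x v) := by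
  rw [← G.map_eq_contr E (G.dract x v)]
  have hla := G.left_adj (fun q : Q => some (E q)) (fun q : Q => some q) x
      (fun d => G.data.map (equivFiberEquiv E d) G.data.one)
      (fun q => G.data.map (idFiberEquiv q) v)
  rw [show G.dract x v
      = G.data.contr (fun q : Q => some q) x (fun q => G.data.map (idFiberEquiv q) v)
    from rfl, ← hla]
  refine contr_congr G
    (show F = pcomp (fun q : Q => some (E q)) (fun q : Q => some q) from funext hF) x ?_
  intro d
  obtain ⟨e2, he2⟩ := hfam d
  rw [he2]
  have hss : Subsingleton (pfib (pcomp (fun q : Q => some (E q)) (fun q : Q => some q)) d) :=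
    ss_graph E.symm _ (fun _ => rfl) d
  have hF' : ∀ p : pfib (pcomp (fun q : Q => some (E q)) (fun q : Q => some q)) d,
      resMap (fun q : Q => some (E q)) (fun q : Q => some q) d p
        = some (equivFiberEquiv E d 0) := by
    intro p
    unfold resMap
    rw [Option.bind_some, dif_pos (show (fun q : Q => some (E q)) p.1 = some d from p.2)]
    refine congrArg some (Subtype.ext ?_)
    show p.1 = E.symm d
    exact (Equiv.eq_symm_apply E).mpr (Option.some.inj p.2)
  have hcomp := mul_sbase' G (ss_graph E.symm _ (fun _ => rfl) d)
    (resMap (fun q : Q => some (E q)) (fun q : Q => some q) d)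
    (equivFiberEquiv E d) hF' G.data.one
    (fun p => G.data.map
      (resFiberEquiv (fun q : Q => some (E q)) (fun q : Q => some q) d p)
      (G.data.map (idFiberEquiv p.1) v))
    v
    ((idFiberEquiv ((equivFiberEquiv E d 0).1)).trans
      (resFiberEquiv (fun q : Q => some (E q)) (fun q : Q => some q) d
        (equivFiberEquiv E d 0)))
    ((G.map_trans _ _ _).symm)
  show HEq (G.data.map e2 v)
    (G.data.mul (resMap (fun q : Q => some (E q)) (fun q : Q => some q) d)
      (G.data.map (equivFiberEquiv E d) G.data.one)
      (fun p => G.data.map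
        (resFiberEquiv (fun q : Q => some (E q)) (fun q : Q => some q) d p)
        (G.data.map (idFiberEquiv p.1) v)))
  refine HEq.trans ?_ (heq_of_eq hcomp.symm)
  rw [G.one_lact]
  exact heq_map G (congrArg (fun f : Q → Option D => pfib f d) (funext hF)) hss e2 _ v

theorem map_dract {Q D : Type} [Finite Q] [Finite D] (B : Q ≃ D)
    (x : G.data.A Q) (v : G.data.A (Fin 1)) :
    G.data.map B (G.dract x v) = G.dract (G.data.map B x) v := by
  have hla := G.left_adj (fun d : D => some d) (fun q : Q => some (B q)) x
      (fun d => G.data.map (idFiberEquiv d) v)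
      (fun d => G.data.map (equivFiberEquiv B d) G.data.one)
  rw [G.map_eq_contr B x] at hla
  have lhs_eq : G.data.contr (pcomp (fun d : D => some d) (fun q : Q => some (B q))) x
      (G.data.emul (fun d : D => some d) (fun q : Q => some (B q))
        (fun d => G.data.map (idFiberEquiv d) v)
        (fun d => G.data.map (equivFiberEquiv B d) G.data.one))
      = G.data.map B (G.dract x v) := by
    apply contr_gdiag G _ B (fun q => rfl) x v
    intro d
    have hF' : ∀ p : pfib (pcomp (fun d : D => some d) (fun q : Q => some (B q))) d,
        resMap (fun d : D => some d) (fun q : Q => some (B q)) d p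
          = some (idFiberEquiv d 0) := by
      intro p
      unfold resMap
      rw [Option.bind_some, dif_pos (show (fun d' : D => some d') (B p.1) = some d from p.2)]
      exact congrArg some (Subtype.ext (Option.some.inj p.2))
    have hcomp := mul_sbase' G (ss_pfib_id d)
      (resMap (fun d : D => some d) (fun q : Q => some (B q)) d)
      (idFiberEquiv d) hF' v
      (fun p => G.data.map
        (resFiberEquiv (fun d : D => some d) (fun q : Q => some (B q)) d p)
        (G.data.map (equivFiberEquiv B p.1) G.data.one))
      G.data.one
      ((equivFiberEquiv B ((idFiberEquiv d 0).1)).trans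
        (resFiberEquiv (fun d : D => some d) (fun q : Q => some (B q)) d
          (idFiberEquiv d 0)))
      ((G.map_trans _ _ _).symm)
    rw [G.lact_one_scalar] at hcomp
    exact ⟨_, by
      show G.data.emul _ _ _ _ d = _
      unfold GenRingData.emul
      exact hcomp⟩
  rw [← lhs_eq, hla]
  rfl

/-- (C'): the left scalar action by an adjoint is the twisted diagonal action. -/
theorem lact_adj {X : Type} [Finite X] (v : G.data.A (Fin 1)) (w : G.data.A X) :
    G.data.lact (G.data.adj v) w = G.dract w v := by
  have hrl := G.right_lin (fun _ : X => some (0 : Fin 1)) (fun _ : Fin 1 => some (0 : Fin 1))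
      G.data.one (fun z => G.data.map (constFiberEquiv X z) w)
      (fun z => G.data.map (constFiberEquiv (Fin 1) z) v)
  show G.data.mul (fun _ : X => some (0 : Fin 1))
    (G.data.contr (fun _ : Fin 1 => some (0 : Fin 1)) G.data.one
      (fun z => G.data.map (constFiberEquiv (Fin 1) z) v))
    (fun z => G.data.map (constFiberEquiv X z) w) = _
  rw [hrl]
  have hinner : G.data.mul (fpSnd (fun _ : X => some (0 : Fin 1)) (fun _ : Fin 1 => some (0 : Fin 1)))
      G.data.one
      (G.data.atilde (fun _ : X => some (0 : Fin 1)) (fun _ : Fin 1 => some (0 : Fin 1))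
        (fun z => G.data.map (constFiberEquiv X z) w))
      = G.data.map
          (⟨fun x => ⟨(x, 0), ⟨0, rfl, rfl⟩⟩, fun p => p.1.1, fun x => rfl,
            fun p => Subtype.ext (Prod.ext rfl (Subsingleton.elim _ _))⟩ :
            X ≃ FP (fun _ : X => some (0 : Fin 1)) (fun _ : Fin 1 => some (0 : Fin 1)))
          w := by
    have := G.one_lact (FP (fun _ : X => some (0 : Fin 1)) (fun _ : Fin 1 => some (0 : Fin 1)))
      (G.data.map
        (⟨fun x => ⟨(x, 0), ⟨0, rfl, rfl⟩⟩, fun p => p.1.1, fun x => rfl,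
          fun p => Subtype.ext (Prod.ext rfl (Subsingleton.elim _ _))⟩ :
          X ≃ FP (fun _ : X => some (0 : Fin 1)) (fun _ : Fin 1 => some (0 : Fin 1)))
        w)
    rw [← this]
    refine mul_congr G
      (show fpSnd (fun _ : X => some (0 : Fin 1)) (fun _ : Fin 1 => some (0 : Fin 1))
          = (fun _ => some (0 : Fin 1)) from
        funext fun p => congrArg some (Subsingleton.elim p.1.2 0)) G.data.one ?_
    intro z
    have hz : z = 0 := Subsingleton.elim z 0
    subst hz
    show HEq (G.data.map
      (fpFiberSnd (fun _ : X => some (0:Fin 1)) (fun _ : Fin 1 => some (0:Fin 1))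
        (rfl : (fun _ : Fin 1 => some (0:Fin 1)) (0 : Fin 1) = some (0 : Fin 1)))
      (G.data.map (constFiberEquiv X 0) w)) _
    rw [← G.map_trans, ← G.map_trans]
    apply heq_map₂ G
      (congrArg (fun f : FP (fun _ : X => some (0:Fin 1)) (fun _ : Fin 1 => some (0:Fin 1))
          → Option (Fin 1) => pfib f 0)
        (funext fun p => congrArg some (Subsingleton.elim p.1.2 0)))
    intro d
    apply heq_pfib (show fpSnd (fun _ : X => some (0:Fin 1)) (fun _ : Fin 1 => some (0:Fin 1))
        = (fun _ : FP (fun _ : X => some (0:Fin 1)) (fun _ : Fin 1 => some (0:Fin 1))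
          => some (0 : Fin 1)) from
      funext fun p => congrArg some (Subsingleton.elim p.1.2 0))
    exact Subtype.ext rfl
  rw [hinner]
  have houter := contr_gdiag G
    (fpFst (fun _ : X => some (0 : Fin 1)) (fun _ : Fin 1 => some (0 : Fin 1)))
    (⟨fun p => p.1.1, fun x => ⟨(x, 0), ⟨0, rfl, rfl⟩⟩,
      fun p => Subtype.ext (Prod.ext rfl (Subsingleton.elim _ _)), fun x => rfl⟩ :
      FP (fun _ : X => some (0 : Fin 1)) (fun _ : Fin 1 => some (0 : Fin 1)) ≃ X)
    (fun p => rfl)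
    (G.data.map
      (⟨fun x => ⟨(x, 0), ⟨0, rfl, rfl⟩⟩, fun p => p.1.1, fun x => rfl,
        fun p => Subtype.ext (Prod.ext rfl (Subsingleton.elim _ _))⟩ :
        X ≃ FP (fun _ : X => some (0 : Fin 1)) (fun _ : Fin 1 => some (0 : Fin 1)))
      w)
    v
    (G.data.ctilde (fun _ : X => some (0 : Fin 1)) (fun _ : Fin 1 => some (0 : Fin 1))
      (fun z => G.data.map (constFiberEquiv (Fin 1) z) v))
    (fun x => ⟨(constFiberEquiv (Fin 1) 0).trans
        (fpFiberFst (fun _ : X => some (0 : Fin 1)) (fun _ : Fin 1 => some (0 : Fin 1)) rfl),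
      by
        show G.data.map
          (fpFiberFst (fun _ : X => some (0:Fin 1)) (fun _ : Fin 1 => some (0:Fin 1))
            (rfl : (fun _ : X => some (0:Fin 1)) x = some (0 : Fin 1)))
          (G.data.map (constFiberEquiv (Fin 1) 0) v) = _
        exact (G.map_trans _ _ v).symm⟩)
  rw [houter, ← map_dract, ← G.map_trans]
  have : (⟨fun x => ⟨(x, 0), ⟨0, rfl, rfl⟩⟩, fun p => p.1.1, fun x => rfl,
      fun p => Subtype.ext (Prod.ext rfl (Subsingleton.elim _ _))⟩ :
      X ≃ FP (fun _ : X => some (0 : Fin 1)) (fun _ : Fin 1 => some (0 : Fin 1))).trans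
    (⟨fun p => p.1.1, fun x => ⟨(x, 0), ⟨0, rfl, rfl⟩⟩,
      fun p => Subtype.ext (Prod.ext rfl (Subsingleton.elim _ _)), fun x => rfl⟩ :
      FP (fun _ : X => some (0 : Fin 1)) (fun _ : Fin 1 => some (0 : Fin 1)) ≃ X)
    = Equiv.refl X := Equiv.ext fun x => rfl
  rw [this, G.map_refl]

/-- (C4): plain right diagonal action equals twisted action by the adjoint. -/
theorem ract_const {X : Type} [Finite X] (w : G.data.A X) (v : G.data.A (Fin 1)) :
    G.data.ract w (fun _ => v) = G.dract w (G.data.adj v) := by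
  have hra := G.right_adj (fun x : X => some x) (fun x : X => some x) w
      (G.data.oneId X) (fun x => G.data.map (idFiberEquiv x) v)
  have hlhs : G.data.contr (pcomp (fun x : X => some x) (fun x : X => some x))
      (G.data.mul (fun x : X => some x) w (fun x => G.data.map (idFiberEquiv x) v))
      (G.data.oneId X)
      = G.data.mul (fun x : X => some x) w (fun x => G.data.map (idFiberEquiv x) v) :=
    G.contr_one_id X _
  rw [hlhs] at hra
  show G.data.mul (fun x : X => some x) w (fun x => G.data.map (idFiberEquiv x) v) = _
  rw [hra]
  refine contr_congr G rfl w ?_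
  intro z
  have hcg := contr_gdiag G
    (resMap (fun x : X => some x) (fun x : X => some x) z)
    (⟨fun p => ⟨p.1, p.2⟩, fun q => ⟨q.1, q.2⟩, fun p => rfl, fun q => rfl⟩ :
      pfib (pcomp (fun x : X => some x) (fun x : X => some x)) z ≃ pfib (fun x : X => some x) z)
    (fun p => by
      unfold resMap
      rw [Option.bind_some, dif_pos (show (fun x : X => some x) p.1 = some z from p.2)]
      exact congrArg some (Subtype.ext rfl))
    (G.data.map (idFiberEquiv z) G.data.one) v
    (fun p => G.data.map (resFiberEquiv (fun x : X => some x) (fun x : X => some x) z p)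
      (G.data.map (idFiberEquiv p.1) v))
    (fun d => ⟨(idFiberEquiv d.1).trans
        (resFiberEquiv (fun x : X => some x) (fun x : X => some x) z d),
      (G.map_trans _ _ _).symm⟩)
  show HEq (G.data.econtr (fun x : X => some x) (fun x : X => some x)
    (G.data.oneId X) (fun x => G.data.map (idFiberEquiv x) v) z)
    (G.data.map (idFiberEquiv z) (G.data.adj v))
  show HEq (G.data.contr (resMap (fun x : X => some x) (fun x : X => some x) z)
    (G.data.map (idFiberEquiv z) G.data.one)
    (fun p => G.data.map (resFiberEquiv (fun x : X => some x) (fun x : X => some x) z p)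
      (G.data.map (idFiberEquiv p.1) v))) _
  rw [hcg]
  have hdo : G.dract G.data.one v = G.data.adj v := (pair_eq_dract G G.data.one v).symm
  have key : ∀ (I : Fin 1 ≃ pfib (pcomp (fun x : X => some x) (fun x : X => some x)) z)
      (E : pfib (pcomp (fun x : X => some x) (fun x : X => some x)) z
      ≃ pfib (fun x : X => some x) z),
      HEq (G.data.map E (G.dract (G.data.map I G.data.one) v))
        (G.data.map (idFiberEquiv z) (G.data.adj v)) := by
    intro I E
    rw [← map_dract]
    rw [hdo, ← G.map_trans]
    letI := ss_pfib_id (X := X) z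
    rw [equiv_eq (I.trans E) (idFiberEquiv z)]
  exact key _ _

/-- (D1): the twisted diagonal action distributes into the fibers of a multiplication. -/
theorem dract_mul {X Y : Type} [Finite X] [Finite Y] (f : X → Option Y)
    (u : G.data.A Y) (bb : (y : Y) → G.data.A (pfib f y)) (v : G.data.A (Fin 1)) :
    G.dract (G.data.mul f u bb) v = G.data.mul f u (fun y => G.dract (bb y) v) := by
  have hll := G.left_lin f (fun x : X => some x) u bb
    (fun x => G.data.map (idFiberEquiv x) v)
  refine Eq.trans (Eq.trans (rfl :
    G.dract (G.data.mul f u bb) v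
      = G.data.contr (fun x : X => some x)
          (G.data.mul (pcomp f (fun x : X => some x)) u bb)
          (fun x => G.data.map (idFiberEquiv x) v)) hll) ?_
  refine congrArg (G.data.mul f u) (funext fun y => ?_)
  have hcg := contr_gdiag G
    (resMap f (fun x : X => some x) y)
    (⟨fun p => ⟨p.1, p.2⟩, fun q => ⟨q.1, q.2⟩, fun p => rfl, fun q => rfl⟩ :
      pfib (pcomp f (fun x : X => some x)) y ≃ pfib f y)
    (fun p => by
      unfold resMap
      rw [Option.bind_some, dif_pos (show f p.1 = some y from p.2)]
      exact congrArg some (Subtype.ext rfl))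
    (bb y) v
    (fun p => G.data.map (resFiberEquiv f (fun x : X => some x) y p)
      (G.data.map (idFiberEquiv p.1) v))
    (fun d => ⟨(idFiberEquiv d.1).trans
        (resFiberEquiv f (fun x : X => some x) y d),
      (G.map_trans _ _ _).symm⟩)
  show G.data.contr (resMap f (fun x : X => some x) y) (bb y)
    (fun p => G.data.map (resFiberEquiv f (fun x : X => some x) y p)
      (G.data.map (idFiberEquiv p.1) v)) = _
  rw [hcg]
  exact eq_of_heq (map_pfib_id G rfl _ (fun q => rfl) _)

/-- (Q1): contraction with a right-diagonal-acted base. -/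
theorem contr_ract {X Y : Type} [Finite X] [Finite Y] (f : X → Option Y)
    (u : G.data.A X) (bb : (y : Y) → G.data.A (pfib f y)) (v : G.data.A (Fin 1)) :
    G.data.contr f (G.data.ract u (fun _ => v)) bb
      = G.data.contr f u (fun y => G.dract (bb y) v) := by
  have hra := G.right_adj f (fun x : X => some x) u bb
    (fun x => G.data.map (idFiberEquiv x) v)
  refine Eq.trans (Eq.trans (rfl :
    G.data.contr f (G.data.ract u (fun _ => v)) bb
      = G.data.contr (pcomp f (fun x : X => some x))
          (G.data.mul (fun x : X => some x) u (fun x => G.data.map (idFiberEquiv x) v))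
          bb) hra) ?_
  refine congrArg (G.data.contr f u) (funext fun y => ?_)
  have hcg := contr_gdiag G
    (resMap f (fun x : X => some x) y)
    (⟨fun p => ⟨p.1, p.2⟩, fun q => ⟨q.1, q.2⟩, fun p => rfl, fun q => rfl⟩ :
      pfib (pcomp f (fun x : X => some x)) y ≃ pfib f y)
    (fun p => by
      unfold resMap
      rw [Option.bind_some, dif_pos (show f p.1 = some y from p.2)]
      exact congrArg some (Subtype.ext rfl))
    (bb y) v
    (fun p => G.data.map (resFiberEquiv f (fun x : X => some x) y p)
      (G.data.map (idFiberEquiv p.1) v))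
    (fun d => ⟨(idFiberEquiv d.1).trans
        (resFiberEquiv f (fun x : X => some x) y d),
      (G.map_trans _ _ _).symm⟩)
  show G.data.contr (resMap f (fun x : X => some x) y) (bb y)
    (fun p => G.data.map (resFiberEquiv f (fun x : X => some x) y p)
      (G.data.map (idFiberEquiv p.1) v)) = _
  rw [hcg]
  exact eq_of_heq (map_pfib_id G rfl _ (fun q => rfl) _)

/-- (Q2): the twisted diagonal action distributes into the fibers of a contraction
as a plain left action. -/
theorem dract_contr {X Y : Type} [Finite X] [Finite Y] (f : X → Option Y)
    (u : G.data.A X) (bb : (y : Y) → G.data.A (pfib f y)) (v : G.data.A (Fin 1)) :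
    G.dract (G.data.contr f u bb) v
      = G.data.contr f u (fun y => G.data.lact v (bb y)) := by
  have hla := G.left_adj (fun y : Y => some y) f u
    (fun y => G.data.map (idFiberEquiv y) v) bb
  have hpc : pcomp (fun y : Y => some y) f = f := by
    funext x
    show (f x).bind (fun y : Y => some y) = f x
    cases f x <;> rfl
  refine Eq.trans (Eq.trans ?_ hla.symm) ?_
  · rfl
  refine contr_congr G hpc u ?_
  intro y
  have hF' : ∀ p : pfib (pcomp (fun y : Y => some y) f) y,
      resMap (fun y : Y => some y) f y p = some (idFiberEquiv y 0) := by
    intro p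
    have hp2 : (f p.1).bind (fun y' : Y => some y') = some y := p.2
    unfold resMap
    rcases hfp : f p.1 with _ | y0
    · rw [hfp] at hp2; exact absurd hp2 (by simp)
    · rw [hfp] at hp2
      rw [Option.bind_some] at hp2
      rw [Option.bind_some]
      have hy0 : y0 = y := Option.some.inj hp2
      subst hy0
      rw [dif_pos rfl]
      exact congrArg some (Subtype.ext rfl)
  have hcomp := mul_sbase' G (ss_pfib_id y)
    (resMap (fun y : Y => some y) f y) (idFiberEquiv y) hF' v
    (fun p => G.data.map (resFiberEquiv (fun y : Y => some y) f y p) (bb p.1))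
    (bb y)
    (resFiberEquiv (fun y : Y => some y) f y (idFiberEquiv y 0))
    rfl
  show HEq (G.data.mul (resMap (fun y : Y => some y) f y)
    (G.data.map (idFiberEquiv y) v)
    (fun p => G.data.map (resFiberEquiv (fun y : Y => some y) f y p) (bb p.1)))
    (G.data.lact v (bb y))
  refine HEq.trans (heq_of_eq hcomp) ?_
  exact map_pfib_id G hpc.symm _ (fun q => rfl) _

/-- (P2): the twisted diagonal action commutes past the base of a multiplication. -/
theorem mul_dract {X Y : Type} [Finite X] [Finite Y] (f : X → Option Y)
    (u : G.data.A Y) (bb : (y : Y) → G.data.A (pfib f y)) (v : G.data.A (Fin 1)) :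
    G.data.mul f (G.dract u v) bb = G.dract (G.data.mul f u bb) v := by
  have h1 := G.right_lin f (fun y : Y => some y) u bb
    (fun y => G.data.map (idFiberEquiv y) v)
  have h2 := G.right_lin f (fun y : Y => some y) u bb (G.data.oneId Y)
  rw [G.contr_one_id Y u] at h2
  have h3 := G.left_adj (fun x : X => some x) (fpFst f (fun y : Y => some y))
    (G.data.mul (fpSnd f (fun y : Y => some y)) u
      (G.data.atilde f (fun y : Y => some y) bb))
    (fun x => G.data.map (idFiberEquiv x) v)
    (G.data.ctilde f (fun y : Y => some y) (G.data.oneId Y))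
  have hkey : G.data.ctilde f (fun y : Y => some y)
        (fun y => G.data.map (idFiberEquiv y) v)
      = G.data.emul (fun x : X => some x) (fpFst f (fun y : Y => some y))
          (fun x => G.data.map (idFiberEquiv x) v)
          (G.data.ctilde f (fun y : Y => some y) (G.data.oneId Y)) := by
    funext x
    rcases hfx : f x with _ | y
    · haveI hie : IsEmpty (pfib (fpFst f (fun y : Y => some y)) x) := ⟨fun p => by
        obtain ⟨ya, hp1, hp2⟩ := p.1.2
        rw [Option.some.inj p.2, hfx] at hp1
        exact absurd hp1 (by simp)⟩
      rw [G.isEmpty_eq_zero _ (G.data.ctilde f (fun y : Y => some y)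
        (fun y => G.data.map (idFiberEquiv y) v) x)]
      exact (G.isEmpty_eq_zero _ _).symm
    · have hss : Subsingleton (pfib (fpFst f (fun y : Y => some y)) x) := by
        constructor
        intro a b
        obtain ⟨ya, ha1, ha2⟩ := a.1.2
        obtain ⟨yb, hb1, hb2⟩ := b.1.2
        have hax : a.1.1.1 = x := Option.some.inj a.2
        have hbx : b.1.1.1 = x := Option.some.inj b.2
        have hya : a.1.1.2 = ya := Option.some.inj ha2
        have hyb : b.1.1.2 = yb := Option.some.inj hb2
        rw [hax, hfx] at ha1
        rw [hbx, hfx] at hb1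
        apply Subtype.ext
        apply Subtype.ext
        apply Prod.ext
        · rw [hax, hbx]
        · rw [hya, hyb, ← Option.some.inj ha1, ← Option.some.inj hb1]
      have hctv : G.data.ctilde f (fun y : Y => some y)
          (fun y => G.data.map (idFiberEquiv y) v) x
          = G.data.map (fpFiberFst f (fun y : Y => some y) hfx)
              (G.data.map (idFiberEquiv y) v) := by
        unfold GenRingData.ctilde
        split
        · rename_i y' hy'
          have : y' = y := Option.some.inj ((hy'.symm).trans hfx)
          subst this
          rfl
        · rename_i hy'
          exact absurd (hy'.symm.trans hfx) (by simp)
      have hct1 : G.data.ctilde f (fun y : Y => some y) (G.data.oneId Y) x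
          = G.data.map ((idFiberEquiv y).trans (fpFiberFst f (fun y : Y => some y) hfx))
              G.data.one := by
        unfold GenRingData.ctilde
        split
        · rename_i y' hy'
          have : y' = y := Option.some.inj ((hy'.symm).trans hfx)
          subst this
          exact (G.map_trans _ _ _).symm
        · rename_i hy'
          exact absurd (hy'.symm.trans hfx) (by simp)
      rw [hctv]
      have hF' : ∀ p : pfib (pcomp (fun x : X => some x)
          (fpFst f (fun y : Y => some y))) x,
          resMap (fun x : X => some x) (fpFst f (fun y : Y => some y)) x p
            = some (idFiberEquiv x 0) := by
        intro p
        have hp2 : (some p.1.1.1 : Option X) = some x := p.2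
        unfold resMap fpFst
        rw [Option.bind_some,
          dif_pos (show (fun x' : X => some x') p.1.1.1 = some x from hp2)]
        exact congrArg some (Subtype.ext (Option.some.inj hp2))
      have hcomp := mul_sbase' G (ss_pfib_id x)
        (resMap (fun x : X => some x) (fpFst f (fun y : Y => some y)) x)
        (idFiberEquiv x) hF' v
        (fun p => G.data.map
          (resFiberEquiv (fun x : X => some x) (fpFst f (fun y : Y => some y)) x p)
          (G.data.ctilde f (fun y : Y => some y) (G.data.oneId Y) p.1))
        G.data.one
        (((idFiberEquiv y).trans (fpFiberFst f (fun y : Y => some y) hfx)).trans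
          (resFiberEquiv (fun x : X => some x) (fpFst f (fun y : Y => some y)) x
            (idFiberEquiv x 0)))
        (by
          show G.data.map
            (resFiberEquiv (fun x' : X => some x') (fpFst f (fun y' : Y => some y')) x
              (idFiberEquiv x 0))
            (G.data.ctilde f (fun y' : Y => some y') (G.data.oneId Y) x) = _
          rw [hct1]
          exact (G.map_trans _ _ _).symm)
      show _ = G.data.mul
        (resMap (fun x : X => some x) (fpFst f (fun y : Y => some y)) x)
        (G.data.map (idFiberEquiv x) v)
        (fun p => G.data.map
          (resFiberEquiv (fun x : X => some x) (fpFst f (fun y : Y => some y)) x p)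
          (G.data.ctilde f (fun y : Y => some y) (G.data.oneId Y) p.1))
      rw [hcomp, G.lact_one_scalar, ← G.map_trans]
      apply eq_of_heq
      exact heq_map G rfl hss _ _ v
  rw [hkey] at h1
  have h3' : G.data.contr (fpFst f (fun y : Y => some y))
      (G.data.mul (fpSnd f (fun y : Y => some y)) u
        (G.data.atilde f (fun y : Y => some y) bb))
      (G.data.emul (fun x : X => some x) (fpFst f (fun y : Y => some y))
        (fun x => G.data.map (idFiberEquiv x) v)
        (G.data.ctilde f (fun y : Y => some y) (G.data.oneId Y)))
      = G.data.contr (fun x : X => some x)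
          (G.data.contr (fpFst f (fun y : Y => some y))
            (G.data.mul (fpSnd f (fun y : Y => some y)) u
              (G.data.atilde f (fun y : Y => some y) bb))
            (G.data.ctilde f (fun y : Y => some y) (G.data.oneId Y)))
          (fun x => G.data.map (idFiberEquiv x) v) := h3
  show G.data.mul f (G.data.contr (fun y : Y => some y) u
    (fun y => G.data.map (idFiberEquiv y) v)) bb = _
  rw [h1, h3', ← h2]
  rfl

theorem op_comm (hsa : ∀ x : G.data.A (Fin 1), G.data.adj x = x)
    (a b : G.data.A (Fin 1)) : G.data.op a b = G.data.op b a := by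
  calc G.data.op a b = G.data.lact a b := G.op_eq_lact a b
    _ = G.data.lact (G.data.adj a) b := by rw [hsa a]
    _ = G.dract b a := G.lact_adj a b
    _ = G.dract b (G.data.adj a) := by rw [hsa a]
    _ = G.data.ract b (fun _ => a) := (G.ract_const b a).symm
    _ = G.data.op b a := rfl

theorem lact_eq_dract {X : Type} [Finite X] {t : G.data.A (Fin 1)}
    (ht : G.data.adj t = t) (w : G.data.A X) : G.data.lact t w = G.dract w t := by
  conv_lhs => rw [← ht]
  exact G.lact_adj t w

theorem lact_mul_base {X Y : Type} [Finite X] [Finite Y] (f : X → Option Y)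
    {t : G.data.A (Fin 1)} (ht : G.data.adj t = t) (u : G.data.A Y)
    (bb : (y : Y) → G.data.A (pfib f y)) :
    G.data.mul f (G.data.lact t u) bb = G.data.lact t (G.data.mul f u bb) := by
  rw [G.lact_eq_dract ht u, G.mul_dract, ← G.lact_eq_dract ht]

theorem lact_mul_fib {X Y : Type} [Finite X] [Finite Y] (f : X → Option Y)
    {t : G.data.A (Fin 1)} (ht : G.data.adj t = t) (u : G.data.A Y)
    (bb : (y : Y) → G.data.A (pfib f y)) :
    G.data.mul f u (fun y => G.data.lact t (bb y)) = G.data.lact t (G.data.mul f u bb) := by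
  calc G.data.mul f u (fun y => G.data.lact t (bb y))
      = G.data.mul f u (fun y => G.dract (bb y) t) := by
        refine congrArg (G.data.mul f u) (funext fun y => ?_)
        exact G.lact_eq_dract ht (bb y)
    _ = G.dract (G.data.mul f u bb) t := (G.dract_mul f u bb t).symm
    _ = G.data.lact t (G.data.mul f u bb) := (G.lact_eq_dract ht _).symm

theorem lact_contr_fib {X Y : Type} [Finite X] [Finite Y] (f : X → Option Y)
    {t : G.data.A (Fin 1)} (ht : G.data.adj t = t) (u : G.data.A X)
    (bb : (y : Y) → G.data.A (pfib f y)) :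
    G.data.contr f u (fun y => G.data.lact t (bb y))
      = G.data.lact t (G.data.contr f u bb) := by
  rw [← G.dract_contr, ← G.lact_eq_dract ht]

theorem lact_contr_base {X Y : Type} [Finite X] [Finite Y] (f : X → Option Y)
    {t : G.data.A (Fin 1)} (ht : G.data.adj t = t) (u : G.data.A X)
    (bb : (y : Y) → G.data.A (pfib f y)) :
    G.data.contr f (G.data.lact t u) bb = G.data.lact t (G.data.contr f u bb) := by
  have h1 : G.data.lact t u = G.data.ract u (fun _ => t) := by
    rw [G.lact_eq_dract ht u, G.ract_const u t, ht]
  rw [h1, G.contr_ract]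
  calc G.data.contr f u (fun y => G.dract (bb y) t)
      = G.data.contr f u (fun y => G.data.lact t (bb y)) := by
        refine congrArg (G.data.contr f u) (funext fun y => ?_)
        exact (G.lact_eq_dract ht (bb y)).symm
    _ = G.data.lact t (G.data.contr f u bb) := G.lact_contr_fib f ht u bb

theorem rel_map (E : EqvIdeal G) {X Y : Type} [Finite X] [Finite Y] (e : X ≃ Y)
    {x y : G.data.A X} (h : E.rel X x y) : E.rel Y (G.data.map e x) (G.data.map e y) := by
  rw [← G.map_eq_contr e x, ← G.map_eq_contr e y]
  exact E.contr_left _ _ h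

theorem rel_lact (E : EqvIdeal G) {X : Type} [Finite X] (s : G.data.A (Fin 1))
    {x y : G.data.A X} (h : E.rel X x y) :
    E.rel X (G.data.lact s x) (G.data.lact s y) := by
  exact E.mul_right _ s (fun z => G.rel_map E (constFiberEquiv X z) h)

theorem rel_op (E : EqvIdeal G) (w : G.data.A (Fin 1))
    {x y : G.data.A (Fin 1)} (h : E.rel (Fin 1) x y) :
    E.rel (Fin 1) (G.data.op w x) (G.data.op w y) := by
  exact E.mul_right _ w (fun z => G.rel_map E (idFiberEquiv z) h)

/-- `erel I` as an equivalence ideal. -/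
def erelIdeal (I : Set (G.data.A (Fin 1))) : EqvIdeal G where
  rel X _ a b := G.erel I X a b
  refl X _ a := fun E hE => E.refl X a
  symm := by intro X _ a b h E hE; exact E.symm X (h E hE)
  trans := by intro X _ a b c h1 h2 E hE; exact E.trans X (h1 E hE) (h2 E hE)
  mul_left := by intro X Y _ _ f a a' b h E hE; exact E.mul_left f b (h E hE)
  mul_right := by intro X Y _ _ f a b b' h E hE; exact E.mul_right f a (fun y => h y E hE)
  contr_left := by intro X Y _ _ f a a' b h E hE; exact E.contr_left f b (h E hE)
  contr_right := by intro X Y _ _ f a b b' h E hE; exact E.contr_right f a (fun y => h y E hE)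

theorem erel_of_mem {I : Set (G.data.A (Fin 1))} {i : G.data.A (Fin 1)} (hi : i ∈ I) :
    G.erel I (Fin 1) i (G.data.zero (Fin 1)) := fun E hE => hE i hi

theorem zero_mem_hideal {I : Set (G.data.A (Fin 1))} (hI : G.IsHIdeal I) :
    G.data.zero (Fin 1) ∈ I := by
  have h := hI Empty (G.data.zero _) (G.data.zero _) (fun x => x.elim) (fun x => x.elim)
  rw [show G.data.ract (G.data.zero Empty) (fun x : Empty => x.elim)
    = G.data.zero Empty from G.mul_zero_left _ _] at h
  rw [show G.data.pair (G.data.zero Empty) (G.data.zero Empty)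
    = G.data.zero (Fin 1) from G.contr_zero_left _ _] at h
  exact h

theorem hideal_op {I : Set (G.data.A (Fin 1))} (hI : G.IsHIdeal I)
    (t : G.data.A (Fin 1)) {i : G.data.A (Fin 1)} (hi : i ∈ I) : G.data.op t i ∈ I := by
  have h := hI (Fin 1) t G.data.one (fun _ => i) (fun _ => hi)
  rwa [show G.data.ract t (fun _ : Fin 1 => i) = G.data.op t i from rfl,
    G.pair_one_right] at h

section Localization

variable {R L : GenRing}

theorem op_right_comm (hsa : ∀ x : R.data.A (Fin 1), R.data.adj x = x) (r t s : R.data.A (Fin 1)) :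
    R.data.op (R.data.op r t) s = R.data.op (R.data.op r s) t := by
  rw [← R.op_assoc, ← R.op_assoc, R.op_comm hsa t s]

theorem adj_phi (hsa : ∀ x : R.data.A (Fin 1), R.data.adj x = x) (φ : GenRingHom R L) (s : R.data.A (Fin 1)) :
    L.data.adj (φ.app (Fin 1) s) = φ.app (Fin 1) s := by
  show L.data.pair L.data.one (φ.app (Fin 1) s) = _
  rw [← φ.app_one, ← φ.app_pair]
  show φ.app (Fin 1) (R.data.adj s) = _
  rw [hsa s]

theorem mulS (p : SpecG R) {s t : R.data.A (Fin 1)} (hs : s ∉ p.I) (ht : t ∉ p.I) :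
    R.data.op s t ∉ p.I := by
  intro hmem
  rcases p.prime.2.2 s t hmem with h | h
  · exact hs h
  · exact ht h

theorem lact_phi_chain (φ : GenRingHom R L) {X : Type} [Finite X] (s t : R.data.A (Fin 1)) (u : L.data.A X) :
    L.data.lact (φ.app (Fin 1) s) (L.data.lact (φ.app (Fin 1) t) u)
      = L.data.lact (φ.app (Fin 1) (R.data.op s t)) u := by
  rw [L.lact_lact, φ.app_op]

/-- the key computation: a common multiple of a multiplication is a `φ`-image. -/
theorem keyM (hsa : ∀ x : R.data.A (Fin 1), R.data.adj x = x) (φ : GenRingHom R L) {X Y : Type} [Finite X] [Finite Y] (f : X → Option Y)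
    (u : L.data.A Y) (bb : (y : Y) → L.data.A (pfib f y))
    (s1 : R.data.A (Fin 1)) (a1 : R.data.A Y)
    (hu : L.data.lact (φ.app (Fin 1) s1) u = φ.app Y a1)
    (sg : R.data.A (Fin 1)) (cc : (y : Y) → R.data.A (pfib f y))
    (hb : ∀ y, L.data.lact (φ.app (Fin 1) sg) (bb y) = φ.app _ (cc y)) :
    L.data.lact (φ.app (Fin 1) (R.data.op s1 sg)) (L.data.mul f u bb)
      = φ.app X (R.data.mul f a1 cc) := by
  rw [← lact_phi_chain φ s1 sg]
  rw [← L.lact_mul_fib f (adj_phi hsa φ sg) u bb]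
  rw [show (fun y => L.data.lact (φ.app (Fin 1) sg) (bb y))
    = (fun y => φ.app _ (cc y)) from funext hb]
  rw [← L.lact_mul_base f (adj_phi hsa φ s1) u, hu, φ.app_mul]

/-- the key computation: a common multiple of a contraction is a `φ`-image. -/
theorem keyC (hsa : ∀ x : R.data.A (Fin 1), R.data.adj x = x) (φ : GenRingHom R L) {X Y : Type} [Finite X] [Finite Y] (f : X → Option Y)
    (u : L.data.A X) (bb : (y : Y) → L.data.A (pfib f y))
    (s1 : R.data.A (Fin 1)) (a1 : R.data.A X)
    (hu : L.data.lact (φ.app (Fin 1) s1) u = φ.app X a1)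
    (sg : R.data.A (Fin 1)) (cc : (y : Y) → R.data.A (pfib f y))
    (hb : ∀ y, L.data.lact (φ.app (Fin 1) sg) (bb y) = φ.app _ (cc y)) :
    L.data.lact (φ.app (Fin 1) (R.data.op s1 sg)) (L.data.contr f u bb)
      = φ.app Y (R.data.contr f a1 cc) := by
  rw [← lact_phi_chain φ s1 sg]
  rw [← L.lact_contr_fib f (adj_phi hsa φ sg) u bb]
  rw [show (fun y => L.data.lact (φ.app (Fin 1) sg) (bb y))
    = (fun y => φ.app _ (cc y)) from funext hb]
  rw [← L.lact_contr_base f (adj_phi hsa φ s1) u, hu, φ.app_contr]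

/-- common denominator for a finite family. -/
theorem commonDenom (hsa : ∀ x : R.data.A (Fin 1), R.data.adj x = x) (p : SpecG R)
    (φ : GenRingHom R L) (hloc : R.IsLocalizationAt {a | a ∉ p.I} φ) {Y : Type} [Finite Y] (T : Y → Type) [∀ y, Finite (T y)]
    (bb : (y : Y) → L.data.A (T y)) :
    ∃ s, s ∉ p.I ∧ ∀ y, ∃ c : R.data.A (T y),
      L.data.lact (φ.app (Fin 1) s) (bb y) = φ.app (T y) c := by
  letI : Fintype Y := Fintype.ofFinite Y
  letI : CommMonoid (R.data.A (Fin 1)) :=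
    { mul := R.data.op
      one := R.data.one
      mul_assoc := fun a b c => (R.op_assoc a b c).symm
      one_mul := R.op_one_left
      mul_one := R.op_one_right
      mul_comm := R.op_comm hsa }
  choose a s hmem heq using fun y => hloc.2.1 (T y) (bb y)
  refine ⟨∏ y, s y, ?_, ?_⟩
  · exact Finset.prod_induction s (· ∉ p.I)
      (fun x y hx hy => mulS p hx hy) p.prime.2.1
      (fun y _ => hmem y)
  · intro y
    have hsplit : (∏ y', s y') = R.data.op (∏ y' ∈ Finset.univ.erase y, s y') (s y) := by
      rw [show R.data.op (∏ y' ∈ Finset.univ.erase y, s y') (s y)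
        = (∏ y' ∈ Finset.univ.erase y, s y') * (s y) from rfl]
      rw [Finset.prod_erase_mul Finset.univ s (Finset.mem_univ y)]
    refine ⟨R.data.lact (∏ y' ∈ Finset.univ.erase y, s y') (a y), ?_⟩
    rw [hsplit, ← lact_phi_chain φ, heq y, φ.app_lact]

/-- the pullback of an equivalence ideal along a homomorphism. -/
def pullIdeal {R' L' : GenRing} (ψ : GenRingHom R' L') (ω : EqvIdeal L') : EqvIdeal R' where
  rel X _ x y := ω.rel X (ψ.app X x) (ψ.app X y)
  refl X _ a := ω.refl X _
  symm := by intro X _ a b h; exact ω.symm X h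
  trans := by intro X _ a b c h1 h2; exact ω.trans X h1 h2
  mul_left := by
    intro X Y _ _ f a a' b h
    show ω.rel X (ψ.app X (R'.data.mul f a b)) (ψ.app X (R'.data.mul f a' b))
    rw [ψ.app_mul, ψ.app_mul]
    exact ω.mul_left f _ h
  mul_right := by
    intro X Y _ _ f a b b' h
    show ω.rel X (ψ.app X (R'.data.mul f a b)) (ψ.app X (R'.data.mul f a b'))
    rw [ψ.app_mul, ψ.app_mul]
    exact ω.mul_right f _ (fun y => h y)
  contr_left := by
    intro X Y _ _ f a a' b h
    show ω.rel Y (ψ.app Y (R'.data.contr f a b)) (ψ.app Y (R'.data.contr f a' b))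
    rw [ψ.app_contr, ψ.app_contr]
    exact ω.contr_left f _ h
  contr_right := by
    intro X Y _ _ f a b b' h
    show ω.rel Y (ψ.app Y (R'.data.contr f a b)) (ψ.app Y (R'.data.contr f a b'))
    rw [ψ.app_contr, ψ.app_contr]
    exact ω.contr_right f _ (fun y => h y)

theorem prodSplit {R : GenRing} (hsa : ∀ x : R.data.A (Fin 1), R.data.adj x = x)
    (p : SpecG R) {Y : Type} [Finite Y] (s : Y → R.data.A (Fin 1))
    (hs : ∀ y, s y ∉ p.I) :
    ∃ t, t ∉ p.I ∧ ∀ y, ∃ r, t = R.data.op r (s y) := by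
  letI : Fintype Y := Fintype.ofFinite Y
  letI : CommMonoid (R.data.A (Fin 1)) :=
    { mul := R.data.op
      one := R.data.one
      mul_assoc := fun a b c => (R.op_assoc a b c).symm
      one_mul := R.op_one_left
      mul_one := R.op_one_right
      mul_comm := R.op_comm hsa }
  refine ⟨∏ y, s y, ?_, ?_⟩
  · exact Finset.prod_induction s (· ∉ p.I)
      (fun x y hx hy => mulS p hx hy) p.prime.2.1 (fun y _ => hs y)
  · intro y
    refine ⟨∏ y' ∈ Finset.univ.erase y, s y', ?_⟩
    rw [show R.data.op (∏ y' ∈ Finset.univ.erase y, s y') (s y)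
      = (∏ y' ∈ Finset.univ.erase y, s y') * (s y) from rfl]
    rw [Finset.prod_erase_mul Finset.univ s (Finset.mem_univ y)]

/-- the localized equivalence ideal used in the proof of stability. -/
noncomputable def locIdeal {R L : GenRing}
    (hsa : ∀ x : R.data.A (Fin 1), R.data.adj x = x) (p : SpecG R)
    (φ : GenRingHom R L) (hloc : R.IsLocalizationAt {a | a ∉ p.I} φ) : EqvIdeal L where
  rel X _ u v := ∃ s, s ∉ p.I ∧ ∃ a b : R.data.A X,
    L.data.lact (φ.app (Fin 1) s) u = φ.app X a ∧
    L.data.lact (φ.app (Fin 1) s) v = φ.app X b ∧ R.erel p.I X a b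
  refl := by
    intro X _ u
    obtain ⟨a, s, hs, h⟩ := hloc.2.1 X u
    exact ⟨s, hs, a, a, h, h, (R.erelIdeal p.I).refl X a⟩
  symm := by
    intro X _ u v h
    obtain ⟨s, hs, a, b, h1, h2, her⟩ := h
    exact ⟨s, hs, b, a, h2, h1, (R.erelIdeal p.I).symm X her⟩
  trans := by
    intro X _ u v w huv hvw
    obtain ⟨s, hs, a, b, h1, h2, her1⟩ := huv
    obtain ⟨t, ht, c, d, h3, h4, her2⟩ := hvw
    have hmid : φ.app X (R.data.lact t b) = φ.app X (R.data.lact s c) := by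
      rw [φ.app_lact, φ.app_lact, ← h2, ← h3,
        lact_phi_chain φ, lact_phi_chain φ, R.op_comm hsa t s]
    obtain ⟨r, hr, hrr⟩ := (hloc.2.2 X _ _).mp hmid
    rw [R.lact_lact, R.lact_lact] at hrr
    refine ⟨R.data.op (R.data.op r t) s, mulS p (mulS p hr ht) hs,
      R.data.lact (R.data.op r t) a, R.data.lact (R.data.op r s) d, ?_, ?_, ?_⟩
    · rw [← lact_phi_chain φ, h1, ← φ.app_lact]
    · rw [op_right_comm hsa, ← lact_phi_chain φ, h4, ← φ.app_lact]
    · have e1 := R.rel_lact (R.erelIdeal p.I) (R.data.op r t) her1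
      have e3 := R.rel_lact (R.erelIdeal p.I) (R.data.op r s) her2
      rw [hrr] at e1
      exact (R.erelIdeal p.I).trans X e1 e3
  mul_left := by
    intro X Y _ _ f u u' bb h
    obtain ⟨s1, hs1, a1, a2, hu1, hu2, her⟩ := h
    obtain ⟨sg, hsg, hcc⟩ := commonDenom hsa p φ hloc (fun y => pfib f y) bb
    choose cc hcc using hcc
    exact ⟨R.data.op s1 sg, mulS p hs1 hsg, R.data.mul f a1 cc, R.data.mul f a2 cc,
      keyM hsa φ f u bb s1 a1 hu1 sg cc hcc,
      keyM hsa φ f u' bb s1 a2 hu2 sg cc hcc,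
      (R.erelIdeal p.I).mul_left f cc her⟩
  mul_right := by
    intro X Y _ _ f u bb bb' h
    choose s hs a b h1 h2 her using h
    obtain ⟨au, su, hsu, hu⟩ := hloc.2.1 Y u
    obtain ⟨sg, hsg, hsplit⟩ := prodSplit hsa p s hs
    choose r hrop using hsplit
    have hC : ∀ y, L.data.lact (φ.app (Fin 1) sg) (bb y)
        = φ.app _ (R.data.lact (r y) (a y)) := by
      intro y
      rw [hrop y, ← lact_phi_chain φ, h1 y, ← φ.app_lact]
    have hD : ∀ y, L.data.lact (φ.app (Fin 1) sg) (bb' y)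
        = φ.app _ (R.data.lact (r y) (b y)) := by
      intro y
      rw [hrop y, ← lact_phi_chain φ, h2 y, ← φ.app_lact]
    exact ⟨R.data.op su sg, mulS p hsu hsg,
      R.data.mul f au (fun y => R.data.lact (r y) (a y)),
      R.data.mul f au (fun y => R.data.lact (r y) (b y)),
      keyM hsa φ f u bb su au hu sg _ hC,
      keyM hsa φ f u bb' su au hu sg _ hD,
      (R.erelIdeal p.I).mul_right f au
        (fun y => R.rel_lact (R.erelIdeal p.I) (r y) (her y))⟩
  contr_left := by
    intro X Y _ _ f u u' bb h
    obtain ⟨s1, hs1, a1, a2, hu1, hu2, her⟩ := h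
    obtain ⟨sg, hsg, hcc⟩ := commonDenom hsa p φ hloc (fun y => pfib f y) bb
    choose cc hcc using hcc
    exact ⟨R.data.op s1 sg, mulS p hs1 hsg, R.data.contr f a1 cc, R.data.contr f a2 cc,
      keyC hsa φ f u bb s1 a1 hu1 sg cc hcc,
      keyC hsa φ f u' bb s1 a2 hu2 sg cc hcc,
      (R.erelIdeal p.I).contr_left f cc her⟩
  contr_right := by
    intro X Y _ _ f u bb bb' h
    choose s hs a b h1 h2 her using h
    obtain ⟨au, su, hsu, hu⟩ := hloc.2.1 X u
    obtain ⟨sg, hsg, hsplit⟩ := prodSplit hsa p s hs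
    choose r hrop using hsplit
    have hC : ∀ y, L.data.lact (φ.app (Fin 1) sg) (bb y)
        = φ.app _ (R.data.lact (r y) (a y)) := by
      intro y
      rw [hrop y, ← lact_phi_chain φ, h1 y, ← φ.app_lact]
    have hD : ∀ y, L.data.lact (φ.app (Fin 1) sg) (bb' y)
        = φ.app _ (R.data.lact (r y) (b y)) := by
      intro y
      rw [hrop y, ← lact_phi_chain φ, h2 y, ← φ.app_lact]
    exact ⟨R.data.op su sg, mulS p hsu hsg,
      R.data.contr f au (fun y => R.data.lact (r y) (a y)),
      R.data.contr f au (fun y => R.data.lact (r y) (b y)),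
      keyC hsa φ f u bb su au hu sg _ hC,
      keyC hsa φ f u bb' su au hu sg _ hD,
      (R.erelIdeal p.I).contr_right f au
        (fun y => R.rel_lact (R.erelIdeal p.I) (r y) (her y))⟩

end Localization

end GenRing

/-- **Nonvanishing of the residue field detects stability.**  Let `R` be a self-adjoint
generalized ring and `𝔭` a prime.  Let `φ : R → L` present `L` as the localization
`R_𝔭` of `R` at `S_𝔭 = A_{[1]} ∖ 𝔭`, let `m_𝔭 = S_𝔭⁻¹𝔭 ⊆ L_{[1]}` be its maximal
`h`-ideal, and let `π : L → K` present `K` as the quotient `F_𝔭 = R_𝔭 / E(m_𝔭)` of `L`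
by the equivalence ideal generated by `m_𝔭` (i.e. `π` is surjective with kernel `E(m_𝔭)`).
Then the residue field `K = F_𝔭` is nonzero (`1 ≠ 0` in `K_{[1]}`) if and only if the
prime `𝔭` is stable. -/
theorem residueField_nonzero_iff_stable (R : GenRing)
    (hsa : ∀ x : R.data.A (Fin 1), R.data.adj x = x) (p : SpecG R)
    (L : GenRing) (φ : GenRingHom R L)
    (hloc : R.IsLocalizationAt {a | a ∉ p.I} φ)
    (K : GenRing) (π : GenRingHom L K)
    (hsurj : ∀ (X : Type) [Finite X], Function.Surjective (π.app X))
    (hker : ∀ (X : Type) [Finite X] (u v : L.data.A X),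
        π.app X u = π.app X v ↔
          L.erel {l : L.data.A (Fin 1) | ∃ a ∈ p.I, ∃ s ∉ p.I,
            L.data.op (φ.app (Fin 1) s) l = φ.app (Fin 1) a} X u v) :
    K.data.one ≠ K.data.zero (Fin 1) ↔
      (∀ a b : R.data.A (Fin 1), R.erel p.I (Fin 1) a b → (a ∈ p.I ↔ b ∈ p.I)) := by
  have hPhiMem : ∀ i ∈ p.I, φ.app (Fin 1) i ∈ {l : L.data.A (Fin 1) | ∃ a ∈ p.I,
      ∃ s ∉ p.I, L.data.op (φ.app (Fin 1) s) l = φ.app (Fin 1) a} := by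
    intro i hi
    exact ⟨i, hi, R.data.one, p.prime.2.1, by rw [φ.app_one, L.op_one_left]⟩
  constructor
  · intro hone a b her
    have hstepA : L.erel {l : L.data.A (Fin 1) | ∃ a ∈ p.I, ∃ s ∉ p.I,
        L.data.op (φ.app (Fin 1) s) l = φ.app (Fin 1) a} (Fin 1)
        (φ.app (Fin 1) a) (φ.app (Fin 1) b) := by
      intro ω hω
      exact her (GenRing.pullIdeal φ ω) (fun i hi => by
        show ω.rel (Fin 1) (φ.app (Fin 1) i) (φ.app (Fin 1) (R.data.zero (Fin 1)))
        rw [φ.app_zero]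
        exact hω _ (hPhiMem i hi))
    have hF3 : ∀ z : L.data.A (Fin 1),
        L.erel {l : L.data.A (Fin 1) | ∃ a ∈ p.I, ∃ s ∉ p.I,
          L.data.op (φ.app (Fin 1) s) l = φ.app (Fin 1) a} (Fin 1) z
          (L.data.zero (Fin 1)) →
        z ∈ {l : L.data.A (Fin 1) | ∃ a ∈ p.I, ∃ s ∉ p.I,
          L.data.op (φ.app (Fin 1) s) l = φ.app (Fin 1) a} := by
      intro z hz
      by_contra hzm
      obtain ⟨az, sz, hsz, hlz⟩ := hloc.2.1 (Fin 1) z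
      have hop : L.data.op (φ.app (Fin 1) sz) z = φ.app (Fin 1) az := by
        rw [L.op_eq_lact]; exact hlz
      have haz : az ∉ p.I := fun h => hzm ⟨az, h, sz, hsz, hop⟩
      obtain ⟨t, ht1, ht2⟩ := hloc.1 az haz
      have h1 : L.data.op (L.data.op t (φ.app (Fin 1) sz)) z = L.data.one := by
        rw [← L.op_assoc, hop, ht1]
      have h10 : L.erel {l : L.data.A (Fin 1) | ∃ a ∈ p.I, ∃ s ∉ p.I,
          L.data.op (φ.app (Fin 1) s) l = φ.app (Fin 1) a} (Fin 1)
          L.data.one (L.data.zero (Fin 1)) := by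
        have hthis := L.rel_op (L.erelIdeal _) (L.data.op t (φ.app (Fin 1) sz)) hz
        rw [h1, L.op_zero_right] at hthis
        exact hthis
      have hpi10 : π.app (Fin 1) L.data.one
          = π.app (Fin 1) (L.data.zero (Fin 1)) := (hker _ _ _).mpr h10
      rw [π.app_one, π.app_zero] at hpi10
      exact hone hpi10
    have hF2 : ∀ x : R.data.A (Fin 1), φ.app (Fin 1) x ∈ {l : L.data.A (Fin 1) |
        ∃ a ∈ p.I, ∃ s ∉ p.I, L.data.op (φ.app (Fin 1) s) l = φ.app (Fin 1) a} →
        x ∈ p.I := by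
      intro x hx
      obtain ⟨c, hc, s, hs, heq⟩ := hx
      rw [← φ.app_op] at heq
      obtain ⟨r, hr, hrr⟩ := (hloc.2.2 (Fin 1) _ _).mp heq
      rw [← R.op_eq_lact, ← R.op_eq_lact] at hrr
      have hrc : R.data.op r c ∈ p.I := R.hideal_op p.prime.1 r hc
      rw [← hrr, R.op_assoc] at hrc
      rcases p.prime.2.2 _ _ hrc with h | h
      · rcases p.prime.2.2 _ _ h with h' | h'
        · exact absurd h' hr
        · exact absurd h' hs
      · exact h
    have hchar : ∀ x : R.data.A (Fin 1),
        x ∈ p.I ↔ π.app (Fin 1) (φ.app (Fin 1) x) = K.data.zero (Fin 1) := by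
      intro x
      constructor
      · intro hx
        have h0 : L.erel {l : L.data.A (Fin 1) | ∃ a ∈ p.I, ∃ s ∉ p.I,
            L.data.op (φ.app (Fin 1) s) l = φ.app (Fin 1) a} (Fin 1)
            (φ.app (Fin 1) x) (L.data.zero (Fin 1)) :=
          fun ω hω => hω _ (hPhiMem x hx)
        have hthis := (hker (Fin 1) _ _).mpr h0
        rw [π.app_zero] at hthis
        exact hthis
      · intro hx
        have h0 : L.erel {l : L.data.A (Fin 1) | ∃ a ∈ p.I, ∃ s ∉ p.I,
            L.data.op (φ.app (Fin 1) s) l = φ.app (Fin 1) a} (Fin 1)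
            (φ.app (Fin 1) x) (L.data.zero (Fin 1)) := by
          apply (hker (Fin 1) _ _).mp
          rw [π.app_zero]; exact hx
        exact hF2 x (hF3 _ h0)
    have hpi : π.app (Fin 1) (φ.app (Fin 1) a) = π.app (Fin 1) (φ.app (Fin 1) b) :=
      (hker _ _ _).mpr hstepA
    rw [hchar a, hchar b, hpi]
  · intro hst hK
    have h10 : L.erel {l : L.data.A (Fin 1) | ∃ a ∈ p.I, ∃ s ∉ p.I,
        L.data.op (φ.app (Fin 1) s) l = φ.app (Fin 1) a} (Fin 1)
        L.data.one (L.data.zero (Fin 1)) := by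
      apply (hker _ _ _).mp
      rw [π.app_one, π.app_zero, hK]
    have hz : (GenRing.locIdeal hsa p φ hloc).rel (Fin 1)
        L.data.one (L.data.zero (Fin 1)) := by
      apply h10
      intro i hi
      obtain ⟨c, hc, s0, hs0, heq⟩ := hi
      refine ⟨s0, hs0, c, R.data.zero (Fin 1), ?_, ?_, ?_⟩
      · rw [← L.op_eq_lact]; exact heq
      · rw [L.lact_zero, ← φ.app_zero]
      · exact R.erel_of_mem hc
    obtain ⟨s, hs, a, b, h1, h0, her⟩ := hz
    have hphisa : φ.app (Fin 1) s = φ.app (Fin 1) a := by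
      rw [← h1, ← L.op_eq_lact, L.op_one_right]
    obtain ⟨r, hr, hrr⟩ := (hloc.2.2 (Fin 1) _ _).mp hphisa
    rw [← R.op_eq_lact, ← R.op_eq_lact] at hrr
    have hb0 : φ.app (Fin 1) b = φ.app (Fin 1) (R.data.zero (Fin 1)) := by
      rw [← h0, L.lact_zero, φ.app_zero]
    obtain ⟨r2, hr2, hrr2⟩ := (hloc.2.2 (Fin 1) _ _).mp hb0
    rw [← R.op_eq_lact, R.lact_zero] at hrr2
    have e1 := R.rel_op (R.erelIdeal p.I) r her
    have e2 := R.rel_op (R.erelIdeal p.I) r2 e1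
    have hval : R.data.op r2 (R.data.op r b) = R.data.zero (Fin 1) := by
      rw [R.op_assoc, R.op_comm hsa r2 r, ← R.op_assoc, hrr2, R.op_zero_right]
    rw [hval, ← hrr] at e2
    have hnot : R.data.op r2 (R.data.op r s) ∉ p.I :=
      GenRing.mulS p hr2 (GenRing.mulS p hr hs)
    exact hnot ((hst _ _ e2).mpr (R.zero_mem_hideal p.prime.1))

end
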